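/- arXiv:1609.06199 — 8 statements merged into one kernel-verified Lean document; each statement's English description precedes it below -/
import Mathlib

section
/- Let d ≥ 1, D = 2d+2, and define ι : ℤ → ℤ by ι(i) = i + ⌈(i-d)/(D-1)⌉. Then for all x, y ∈ ℤ, ⌊|ι(x) - ι(y)|/D⌋ = ⌊|x - y|/(D-1)⌋. -/
private lemma aux_key (m t a : ℤ) (hm : 0 < m) (ha : 0 ≤ a) :
    0 ≤ a + (t / m - (t - a) / m) ∧
      (a + (t / m - (t - a) / m)) / (m + 1) = a / m := by
  have hm0 : m ≠ 0 := hm.ne'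
  set q := a / m with hq
  set r := a % m with hr
  have hr0 : 0 ≤ r := Int.emod_nonneg a hm0
  have hr1 : r < m := Int.emod_lt_of_pos a hm
  have ha' : a = m * q + r := by rw [hq, hr]; exact (Int.mul_ediv_add_emod a m).symm
  have hq0 : 0 ≤ q := Int.ediv_nonneg ha hm.le
  have hta : t - a = (t - r) + m * (-q) := by rw [ha']; ring
  have h1 : (t - a) / m = (t - r) / m + (-q) := by
    rw [hta, Int.add_mul_ediv_left _ _ hm0]
  set ε := t / m - (t - r) / m with hε
  have hdiff : t / m - (t - a) / m = q + ε := by rw [h1, hε]; ring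
  have hε0 : 0 ≤ ε := by
    have := Int.ediv_le_ediv hm (show t - r ≤ t by linarith)
    simp [hε]; linarith
  have hε1 : ε ≤ 1 := by
    have h2 : t ≤ (t - r) + m * 1 := by linarith
    have := Int.ediv_le_ediv hm h2
    rw [Int.add_mul_ediv_left _ _ hm0] at this
    simp [hε]; linarith
  have hnum : a + (t / m - (t - a) / m) = (r + ε) + (m + 1) * q := by
    rw [hdiff, ha']; ring
  constructor
  · rw [hnum]; positivity
  · rw [hnum, Int.add_mul_ediv_left _ _ (show m + 1 ≠ 0 by omega),
      Int.ediv_eq_zero_of_lt (by linarith) (by linarith)]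
    simp

private lemma aux_main (d : ℤ) (hd : 1 ≤ d) (ι : ℤ → ℤ)
    (hι : ∀ i : ℤ, ι i = i + ⌈((i : ℚ) - (d : ℚ)) / (2 * (d : ℚ) + 1)⌉)
    (x y : ℤ) (hxy : y ≤ x) :
    |ι x - ι y| / (2 * d + 2) = |x - y| / (2 * d + 1) := by
  have hm : (0:ℤ) < 2 * d + 1 := by linarith
  have hc : ∀ i : ℤ, ι i = i - (d - i) / (2 * d + 1) := by
    intro i
    rw [hι i]
    have hcast : ((i : ℚ) - d) / (2 * d + 1) =
        -(((d - i : ℤ) : ℚ) / (((2 * d + 1).toNat : ℕ) : ℚ)) := by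
      have : (((2 * d + 1).toNat : ℕ) : ℚ) = ((2 : ℚ) * d + 1) := by
        have h : (((2 * d + 1).toNat : ℕ) : ℚ) = (((2 * d + 1 : ℤ)) : ℚ) := by
          exact_mod_cast congrArg (fun z : ℤ => (z : ℚ)) (Int.toNat_of_nonneg hm.le)
        rw [h]; push_cast; ring
      rw [this]; push_cast; ring
    rw [hcast, Int.ceil_neg, Rat.floor_intCast_div_natCast,
      Int.toNat_of_nonneg hm.le]
    ring
  have key := aux_key (2 * d + 1) (d - y) (x - y) hm (by linarith)
  have hval : ι x - ι y = (x - y) + ((d - y) / (2 * d + 1) - ((d - y) - (x - y)) / (2 * d + 1)) := by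
    rw [hc x, hc y]
    have : (d - y) - (x - y) = d - x := by ring
    rw [this]; ring
  rw [abs_of_nonneg (show (0:ℤ) ≤ x - y by linarith),
    abs_of_nonneg (by rw [hval]; exact key.1)]
  rw [hval]
  have : (2:ℤ) * d + 2 = (2 * d + 1) + 1 := by ring
  rw [this]
  exact key.2

theorem stmt_3 (d : ℤ) (hd : 1 ≤ d) (ι : ℤ → ℤ)
    (hι : ∀ i : ℤ, ι i = i + ⌈((i : ℚ) - (d : ℚ)) / (2 * (d : ℚ) + 1)⌉)
    (x y : ℤ) :
    |ι x - ι y| / (2 * d + 2) = |x - y| / (2 * d + 1) := by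
  rcases le_total y x with h | h
  · exact aux_main d hd ι hι x y h
  · rw [abs_sub_comm (ι x), abs_sub_comm x]
    exact aux_main d hd ι hι y x h
end

section
/- Let a, t ∈ ℕ with t ≤ a. In ℤ[v], the sum over all pairs (x, y) of natural numbers with x + y = t of qbinom(a, x) · qbinom(a - x, y) · v^{x(x+1) + 2x(a-t)} equals qbinom(a, t) · ∏_{i=1}^{t} (1 + v^{2(a-t+i)}), where qbinom denotes the Gaussian binomial coefficient in base v² (with quantum integer [m] = 1 + v² + ... + v^{2(m-1)}). -/
open Polynomial

/-- The quantum integer `[m] = 1 + v² + ⋯ + v^{2(m-1)}` as a polynomial in `v`. -/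
noncomputable def qint (m : ℕ) : Polynomial ℤ := ∑ k ∈ Finset.range m, X ^ (2 * k)

/-- The quantum factorial `[m]! = [m][m-1]⋯[1]`. -/
noncomputable def qfac : ℕ → Polynomial ℤ
  | 0 => 1
  | m + 1 => qfac m * qint (m + 1)

lemma qint_eval_one (m : ℕ) : (qint m).eval 1 = m := by simp [qint, Polynomial.eval_finset_sum]

lemma qfac_eval_one (m : ℕ) : (qfac m).eval 1 = Nat.factorial m := by
  induction m with
  | zero => simp [qfac]
  | succ n ih => simp [qfac, ih, qint_eval_one, Nat.factorial_succ]; push_cast; ring_nf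

lemma qfac_ne_zero (m : ℕ) : qfac m ≠ 0 := by
  intro h
  have := congrArg (Polynomial.eval 1) h
  rw [qfac_eval_one] at this
  simp at this
  exact Nat.factorial_ne_zero m this

lemma qint_add (p q : ℕ) : qint (p + q) = qint p + X ^ (2*p) * qint q := by
  rw [qint, qint, qint, Finset.sum_range_add, Finset.mul_sum]
  congr 1
  apply Finset.sum_congr rfl
  intro i _
  rw [← pow_add]
  congr 1
  omega

section
variable (qbinom : ℕ → ℕ → Polynomial ℤ)
    (hq : ∀ n r : ℕ, r ≤ n → qbinom n r * qfac r * qfac (n - r) = qfac n)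
include hq

lemma qbinom_zero (n : ℕ) : qbinom n 0 = 1 := by
  have h := hq n 0 (Nat.zero_le n)
  rw [Nat.sub_zero] at h
  refine mul_right_cancel₀ (qfac_ne_zero n) ?_
  rw [one_mul]
  calc qbinom n 0 * qfac n = qbinom n 0 * qfac 0 * qfac n := by
        rw [show qfac 0 = 1 from rfl, mul_one]
    _ = qfac n := h

lemma qbinom_self (n : ℕ) : qbinom n n = 1 := by
  have h := hq n n le_rfl
  rw [Nat.sub_self] at h
  refine mul_right_cancel₀ (qfac_ne_zero n) ?_
  rw [one_mul]
  calc qbinom n n * qfac n = qbinom n n * qfac n * qfac 0 := by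
        rw [show qfac 0 = 1 from rfl, mul_one]
    _ = qfac n := h

lemma qpascal {n r : ℕ} (h : r < n) :
    qbinom (n+1) (r+1) = X ^ (2*(r+1)) * qbinom n (r+1) + qbinom n r := by
  apply mul_right_cancel₀ (mul_ne_zero (qfac_ne_zero (r+1)) (qfac_ne_zero (n-r)))
  have h1 := hq (n+1) (r+1) (by omega)
  have h2 := hq n (r+1) (by omega)
  have h3 := hq n r (le_of_lt h)
  rw [show n + 1 - (r + 1) = n - r by omega] at h1
  rw [show n - (r+1) = n - r - 1 by omega] at h2
  have e4 : qfac (n - r) = qfac (n - r - 1) * qint (n - r) := by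
    have e3 : n - r = (n - r - 1) + 1 := by omega
    conv_lhs => rw [e3]
    rw [show qfac ((n-r-1)+1) = qfac (n-r-1) * qint ((n-r-1)+1) from rfl, ← e3]
  have e5 : qfac (r + 1) = qfac r * qint (r + 1) := rfl
  have e6 : qint (n + 1) = qint (r+1) + X ^ (2*(r+1)) * qint (n - r) := by
    rw [← qint_add]; congr 1; omega
  have e7 : qfac (n + 1) = qfac n * qint (n + 1) := rfl
  linear_combination h1 + e7 + qfac n * e6 - qint (r+1) * h3 -
    X^(2*(r+1)) * qint (n-r) * h2 - qbinom n r * qfac (n-r) * e5 -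
    X^(2*(r+1)) * qbinom n (r+1) * qfac (r+1) * e4

lemma qsplit {x t a : ℕ} (hx : x ≤ t) (hta : t ≤ a) :
    qbinom a x * qbinom (a-x) (t-x) = qbinom a t * qbinom t x := by
  apply mul_right_cancel₀ (mul_ne_zero (mul_ne_zero (qfac_ne_zero x)
    (qfac_ne_zero (t-x))) (qfac_ne_zero (a-t)))
  have h1 := hq a x (le_trans hx hta)
  have h2 := hq (a-x) (t-x) (by omega)
  have h3 := hq a t hta
  have h4 := hq t x hx
  rw [show a - x - (t - x) = a - t by omega] at h2
  linear_combination h1 - h3 + qbinom a x * qfac x * h2 - qbinom a t * qfac (a-t) * h4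

end

section
variable (qbinom : ℕ → ℕ → Polynomial ℤ)
    (hq : ∀ n r : ℕ, r ≤ n → qbinom n r * qfac r * qfac (n - r) = qfac n)
include hq

lemma qbt (t : ℕ) : ∀ s : ℕ,
    ∑ x ∈ Finset.range (t+1), qbinom t x * X ^ (x*(x+1) + 2*x*s)
      = ∏ i ∈ Finset.range t, (1 + (X : Polynomial ℤ) ^ (2*(s+(i+1)))) := by
  induction t with
  | zero => intro s; simp [qbinom_zero qbinom hq]
  | succ t ih =>
    intro s
    have hrhs : (∏ i ∈ Finset.range (t+1), (1 + (X:Polynomial ℤ) ^ (2*(s+(i+1)))))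
        = (∏ i ∈ Finset.range t, (1 + (X:Polynomial ℤ) ^ (2*((s+1)+(i+1)))))
            * (1 + X ^ (2*(s+1))) := by
      rw [Finset.prod_range_succ']
      congr 1
      apply Finset.prod_congr rfl; intro i _; congr 3; omega
    rw [hrhs, ← ih (s+1), Finset.sum_mul]
    have key : ∀ x ∈ Finset.range t,
        qbinom (t+1) (x+1) * X ^ ((x+1)*((x+1)+1) + 2*(x+1)*s)
          = qbinom t (x+1) * X ^ ((x+1)*((x+1)+1) + 2*(x+1)*(s+1))
            + qbinom t x * X ^ (x*(x+1) + 2*x*(s+1)) * X ^ (2*(s+1)) := by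
      intro x hx
      rw [qpascal qbinom hq (Finset.mem_range.mp hx)]
      ring
    calc ∑ x ∈ Finset.range (t+1+1), qbinom (t+1) x * X ^ (x*(x+1) + 2*x*s)
        = (∑ x ∈ Finset.range t, qbinom (t+1) (x+1) * X ^ ((x+1)*((x+1)+1) + 2*(x+1)*s))
          + qbinom (t+1) (t+1) * X ^ ((t+1)*((t+1)+1) + 2*(t+1)*s)
          + qbinom (t+1) 0 * X ^ (0*(0+1) + 2*0*s) := by
          rw [Finset.sum_range_succ' _ (t+1), Finset.sum_range_succ]
      _ = (∑ x ∈ Finset.range t,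
            (qbinom t (x+1) * X ^ ((x+1)*((x+1)+1) + 2*(x+1)*(s+1))
              + qbinom t x * X ^ (x*(x+1) + 2*x*(s+1)) * X ^ (2*(s+1))))
          + qbinom t t * X ^ (t*(t+1) + 2*t*(s+1)) * X ^ (2*(s+1))
          + qbinom t 0 * X ^ (0*(0+1) + 2*0*(s+1)) := by
          rw [Finset.sum_congr rfl key, qbinom_self qbinom hq, qbinom_zero qbinom hq,
              qbinom_self qbinom hq, qbinom_zero qbinom hq]
          ring
      _ = ((∑ x ∈ Finset.range t, qbinom t (x+1) * X ^ ((x+1)*((x+1)+1) + 2*(x+1)*(s+1)))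
            + qbinom t 0 * X ^ (0*(0+1) + 2*0*(s+1)))
          + ((∑ x ∈ Finset.range t, qbinom t x * X ^ (x*(x+1) + 2*x*(s+1)) * X ^ (2*(s+1)))
            + qbinom t t * X ^ (t*(t+1) + 2*t*(s+1)) * X ^ (2*(s+1))) := by
          rw [Finset.sum_add_distrib]
          ring
      _ = (∑ x ∈ Finset.range (t+1), qbinom t x * X ^ (x*(x+1) + 2*x*(s+1)))
          + ∑ x ∈ Finset.range (t+1), qbinom t x * X ^ (x*(x+1) + 2*x*(s+1)) * X ^ (2*(s+1)) := by
          rw [Finset.sum_range_succ' (fun x => qbinom t x * X ^ (x*(x+1) + 2*x*(s+1))) t,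
              Finset.sum_range_succ (fun x => qbinom t x * X ^ (x*(x+1) + 2*x*(s+1)) * X ^ (2*(s+1))) t]
      _ = ∑ x ∈ Finset.range (t+1), qbinom t x * X ^ (x*(x+1) + 2*x*(s+1)) * (1 + X ^ (2*(s+1))) := by
          rw [← Finset.sum_add_distrib]
          apply Finset.sum_congr rfl
          intro x _
          ring

end


/-- `∑_{x+y=t} qbinom(a,x)·qbinom(a-x,y)·v^{x(x+1)+2x(a-t)}
      = qbinom(a,t) · ∏_{i=1}^{t} (1 + v^{2(a-t+i)})` in `ℤ[v]`,
where the Gaussian binomial `qbinom` is characterized by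
`qbinom(n,r)·[r]!·[n-r]! = [n]!` for `r ≤ n`. -/
theorem stmt_5 (qbinom : ℕ → ℕ → Polynomial ℤ)
    (hq : ∀ n r : ℕ, r ≤ n → qbinom n r * qfac r * qfac (n - r) = qfac n)
    (a t : ℕ) (hta : t ≤ a) :
    ∑ x ∈ Finset.range (t + 1),
        qbinom a x * qbinom (a - x) (t - x) * X ^ (x * (x + 1) + 2 * x * (a - t))
      = qbinom a t * ∏ i ∈ Finset.range t, (1 + (X : Polynomial ℤ) ^ (2 * (a - t + (i + 1)))) := by
  calc ∑ x ∈ Finset.range (t + 1),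
        qbinom a x * qbinom (a - x) (t - x) * X ^ (x * (x + 1) + 2 * x * (a - t))
      = ∑ x ∈ Finset.range (t + 1),
          qbinom a t * (qbinom t x * X ^ (x * (x + 1) + 2 * x * (a - t))) := by
        apply Finset.sum_congr rfl
        intro x hx
        rw [qsplit qbinom hq (Nat.lt_succ_iff.mp (Finset.mem_range.mp hx)) hta]
        ring
    _ = qbinom a t * ∑ x ∈ Finset.range (t + 1),
          qbinom t x * X ^ (x * (x + 1) + 2 * x * (a - t)) := by rw [Finset.mul_sum]
    _ = qbinom a t * ∏ i ∈ Finset.range t, (1 + (X : Polynomial ℤ) ^ (2 * (a - t + (i + 1)))) := by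
        rw [qbt qbinom hq t (a - t)]
end

section
/- Let d ≥ 1. Let B_d denote the set of bijections g of {-d, ..., -1, 0, 1, ..., d} satisfying g(-i) = -g(i) for all i (signed permutations). For g ∈ B_d define inv(g) = #{(i,j) : 1 ≤ i < j ≤ d, g(i) > g(j)}, neg(g) = #{i : 1 ≤ i ≤ d, g(i) < 0}, nsp(g) = #{(i,j) : 1 ≤ i < j ≤ d, g(i) + g(j) < 0}, and inv_B(g) = inv(g) + neg(g) + nsp(g). Then ∑_{g ∈ B_d} q^{inv_B(g)} = ∏_{k=1}^{d} (1 + q + q² + ... + q^{2k-1}) in ℤ[q]. -/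
open Polynomial

/-- The integer interval `[-d..d]` as a type. -/
abbrev IccInt (d : ℕ) : Type := {x : ℤ // x ∈ Finset.Icc (-(d : ℤ)) (d : ℤ)}

namespace S7

open Finset

lemma card_val_cond {n : ℕ} (P : ℕ → Prop) [DecidablePred P] :
    (univ.filter (fun i : Fin n => P i.val)).card = ((Finset.range n).filter P).card := by
  apply Finset.card_bij (fun (a : Fin n) _ => a.val)
  · intro a ha; simp only [mem_filter, mem_range, mem_univ, true_and] at *
    exact ⟨a.isLt, ha⟩
  · intro a _ b _ h; exact Fin.ext h
  · intro b hb; simp only [mem_filter, mem_range, mem_univ, true_and] at *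
    exact ⟨⟨b, hb.1⟩, hb.2, rfl⟩

lemma card_castSucc_lt {n : ℕ} (k : Fin (n+1)) :
    (univ.filter (fun i : Fin n => i.castSucc < k)).card = k.val := by
  have h1 : ∀ i : Fin n, (i.castSucc < k) = (i.val < k.val) := by
    intro i; simp [Fin.lt_def]
  simp only [h1]
  rw [card_val_cond (fun m => m < k.val)]
  have : (Finset.range n).filter (fun m => m < k.val) = Finset.range k.val := by
    ext m; simp only [mem_filter, mem_range]; omega
  rw [this, card_range]

lemma card_le_castSucc {n : ℕ} (k : Fin (n+1)) :
    (univ.filter (fun i : Fin n => k ≤ i.castSucc)).card = n - k.val := by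
  have h1 : ∀ i : Fin n, (k ≤ i.castSucc) = (k.val ≤ i.val) := by
    intro i; simp [Fin.le_def]
  simp only [h1]
  rw [card_val_cond (fun m => k.val ≤ m)]
  have : (Finset.range n).filter (fun m => k.val ≤ m) = Finset.Ico k.val n := by
    ext m; simp only [mem_filter, mem_range, mem_Ico]; omega
  rw [this, Nat.card_Ico]


-- from b.lean

lemma card_pairs_insertNth {n : ℕ} (P : ℤ → ℤ → Prop) [DecidableRel P]
    (k : Fin (n+1)) (x : ℤ) (w' : Fin n → ℤ) :
    ((univ : Finset (Fin (n+1) × Fin (n+1))).filter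
        (fun p => p.1 < p.2 ∧ P ((k.insertNth x w' : Fin (n+1) → ℤ) p.1) ((k.insertNth x w' : Fin (n+1) → ℤ) p.2))).card
    = ((univ : Finset (Fin n × Fin n)).filter
        (fun p => p.1 < p.2 ∧ P (w' p.1) (w' p.2))).card
      + ((univ : Finset (Fin n)).filter (fun i => i.castSucc < k ∧ P (w' i) x)).card
      + ((univ : Finset (Fin n)).filter (fun j => k ≤ j.castSucc ∧ P x (w' j))).card := by
  classical
  set w : Fin (n+1) → ℤ := k.insertNth x w' with hw
  have hcard : ∀ {m : ℕ} (Q : Fin m × Fin m → Prop) (_ : DecidablePred Q),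
      ((univ : Finset (Fin m × Fin m)).filter Q).card
        = ∑ i : Fin m, ∑ j : Fin m, if Q (i, j) then 1 else 0 := by
    intro m Q hQ
    rw [Finset.card_filter]; exact Fintype.sum_prod_type (f := fun p : Fin m × Fin m => if Q p then (1:ℕ) else 0)
  rw [hcard _ inferInstance, hcard _ inferInstance]
  rw [Fin.sum_univ_succAbove _ k]
  have hsplit : ∀ i : Fin (n+1),
      (∑ j : Fin (n+1), if i < j ∧ P (w i) (w j) then 1 else 0)
      = (if i < k ∧ P (w i) x then 1 else 0)
        + ∑ j : Fin n, if i < k.succAbove j ∧ P (w i) (w' j) then 1 else 0 := by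
    intro i
    rw [Fin.sum_univ_succAbove _ k]
    simp [hw, Fin.insertNth_apply_same, Fin.insertNth_apply_succAbove]
  simp only [hsplit]
  rw [Finset.sum_add_distrib]
  have h0 : (if k < k ∧ P (w k) x then 1 else 0) = 0 := by simp
  have hk : ∀ j : Fin n, w (k.succAbove j) = w' j := by
    intro j; simp [hw]
  have hkk : w k = x := by simp [hw]
  rw [h0, zero_add]
  have e1 : (∑ j : Fin n, if k < k.succAbove j ∧ P (w k) (w' j) then 1 else 0)
      = ((univ : Finset (Fin n)).filter (fun j => k ≤ j.castSucc ∧ P x (w' j))).card := by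
    rw [Finset.card_filter]
    apply Finset.sum_congr rfl
    intro j _
    simp only [hkk, Fin.lt_succAbove_iff_le_castSucc]
  have e2 : (∑ i : Fin n, if k.succAbove i < k ∧ P (w (k.succAbove i)) x then 1 else 0)
      = ((univ : Finset (Fin n)).filter (fun i => i.castSucc < k ∧ P (w' i) x)).card := by
    rw [Finset.card_filter]
    apply Finset.sum_congr rfl
    intro i _
    simp only [hk, Fin.succAbove_lt_iff_castSucc_lt]
  have e3 : (∑ i : Fin n, ∑ j : Fin n,
        if k.succAbove i < k.succAbove j ∧ P (w (k.succAbove i)) (w' j) then 1 else 0)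
      = ∑ i : Fin n, ∑ j : Fin n, if (i, j).1 < (i, j).2 ∧ P (w' (i,j).1) (w' (i,j).2) then 1 else 0 := by
    apply Finset.sum_congr rfl; intro i _
    apply Finset.sum_congr rfl; intro j _
    simp only [hk, Fin.succAbove_lt_succAbove_iff]
  rw [e1, e2, e3]
  ring

lemma card_single_insertNth {n : ℕ} (P : ℤ → Prop) [DecidablePred P]
    (k : Fin (n+1)) (x : ℤ) (w' : Fin n → ℤ) :
    ((univ : Finset (Fin (n+1))).filter (fun i => P ((k.insertNth x w' : Fin (n+1) → ℤ) i))).card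
    = ((univ : Finset (Fin n)).filter (fun i => P (w' i))).card + (if P x then 1 else 0) := by
  classical
  rw [Finset.card_filter, Finset.card_filter, Fin.sum_univ_succAbove _ k]
  simp [Fin.insertNth_apply_same, Fin.insertNth_apply_succAbove, add_comm]


-- from c.lean

def stat (d : ℕ) (w : Fin d → ℤ) : ℕ :=
  ((univ.filter (fun p : Fin d × Fin d => p.1 < p.2 ∧ w p.2 < w p.1)).card)
  + ((univ.filter (fun i : Fin d => w i < 0)).card)
  + ((univ.filter (fun p : Fin d × Fin d => p.1 < p.2 ∧ w p.1 + w p.2 < 0)).card)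

lemma stat_insertNth_pos {n : ℕ} (k : Fin (n+1)) (w' : Fin n → ℤ)
    (hb : ∀ i, |w' i| ≤ n) :
    stat (n+1) (k.insertNth ((n:ℤ)+1) w') = stat n w' + (n - k.val) := by
  classical
  set x : ℤ := (n:ℤ)+1 with hx
  have hxb : ∀ i, w' i < x ∧ -x < w' i := by
    intro i
    have := hb i
    cases' abs_le.mp this with h2 h3
    constructor <;> omega
  unfold stat
  rw [card_pairs_insertNth (fun a b => b < a) k x w',
      card_pairs_insertNth (fun a b => a + b < 0) k x w',
      card_single_insertNth (fun a => a < 0) k x w']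
  have e1 : (univ.filter (fun i : Fin n => i.castSucc < k ∧ x < w' i)) = ∅ := by
    apply Finset.filter_false_of_mem
    intro i _ h; exact absurd h.2 (by have := (hxb i).1; omega)
  have e2 : (univ.filter (fun j : Fin n => k ≤ j.castSucc ∧ w' j < x))
      = (univ.filter (fun j : Fin n => k ≤ j.castSucc)) := by
    apply Finset.filter_congr
    intro j _
    have := (hxb j).1
    simp only [and_iff_left_iff_imp]
    intro _; omega
  have e3 : (univ.filter (fun i : Fin n => i.castSucc < k ∧ w' i + x < 0)) = ∅ := by
    apply Finset.filter_false_of_mem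
    intro i _ h; exact absurd h.2 (by have := (hxb i).2; omega)
  have e4 : (univ.filter (fun j : Fin n => k ≤ j.castSucc ∧ x + w' j < 0)) = ∅ := by
    apply Finset.filter_false_of_mem
    intro j _ h; exact absurd h.2 (by have := (hxb j).2; omega)
  rw [e1, e2, e3, e4, card_le_castSucc]
  have hneg : ¬ (x < 0) := by omega
  simp only [hneg, if_false, Finset.card_empty]
  omega

lemma stat_insertNth_neg {n : ℕ} (k : Fin (n+1)) (w' : Fin n → ℤ)
    (hb : ∀ i, |w' i| ≤ n) :
    stat (n+1) (k.insertNth (-((n:ℤ)+1)) w') = stat n w' + (n + 1 + k.val) := by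
  classical
  set x : ℤ := -((n:ℤ)+1) with hx
  have hxb : ∀ i, w' i < -x ∧ x < w' i := by
    intro i
    have := hb i
    cases' abs_le.mp this with h2 h3
    constructor <;> omega
  unfold stat
  rw [card_pairs_insertNth (fun a b => b < a) k x w',
      card_pairs_insertNth (fun a b => a + b < 0) k x w',
      card_single_insertNth (fun a => a < 0) k x w']
  have e1 : (univ.filter (fun i : Fin n => i.castSucc < k ∧ x < w' i))
      = (univ.filter (fun i : Fin n => i.castSucc < k)) := by
    apply Finset.filter_congr
    intro i _
    have := (hxb i).2
    simp only [and_iff_left_iff_imp]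
    intro _; omega
  have e2 : (univ.filter (fun j : Fin n => k ≤ j.castSucc ∧ w' j < x)) = ∅ := by
    apply Finset.filter_false_of_mem
    intro j _ h; exact absurd h.2 (by have := (hxb j).2; omega)
  have e3 : (univ.filter (fun i : Fin n => i.castSucc < k ∧ w' i + x < 0))
      = (univ.filter (fun i : Fin n => i.castSucc < k)) := by
    apply Finset.filter_congr
    intro i _
    have := (hxb i).1
    simp only [and_iff_left_iff_imp]
    intro _; omega
  have e4 : (univ.filter (fun j : Fin n => k ≤ j.castSucc ∧ x + w' j < 0))
      = (univ.filter (fun j : Fin n => k ≤ j.castSucc)) := by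
    apply Finset.filter_congr
    intro j _
    have := (hxb j).1
    simp only [and_iff_left_iff_imp]
    intro _; omega
  rw [e1, e2, e3, e4, card_le_castSucc, card_castSucc_lt]
  have hneg : (x < 0) := by omega
  simp only [hneg, if_true, Finset.card_empty]
  have hk := k.isLt
  omega


-- from d.lean

noncomputable def SP (d : ℕ) : Finset (Fin d → ℤ) :=
  (Fintype.piFinset fun _ => Finset.Icc (-(d:ℤ)) d).filter
    (fun w => (∀ i, w i ≠ 0) ∧ Function.Injective fun i => |w i|)

lemma mem_SP {d : ℕ} {w : Fin d → ℤ} :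
    w ∈ SP d ↔ (∀ i, |w i| ≤ d) ∧ (∀ i, w i ≠ 0) ∧ Function.Injective fun i => |w i| := by
  simp only [SP, Finset.mem_filter, Fintype.mem_piFinset, Finset.mem_Icc, ← abs_le, and_assoc]

def sval (d : ℕ) (s : Bool) : ℤ := if s then -((d:ℤ)+1) else (d:ℤ)+1

lemma abs_sval (d : ℕ) (s : Bool) : |sval d s| = (d:ℤ)+1 := by
  have h : (0:ℤ) ≤ (d:ℤ)+1 := by positivity
  rcases s with _|_
  · show |(d:ℤ)+1| = _; rw [abs_of_nonneg h]
  · show |-((d:ℤ)+1)| = _; rw [abs_neg, abs_of_nonneg h]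

lemma insertNth_mem_SP {d : ℕ} (k : Fin (d+1)) (s : Bool) {w' : Fin d → ℤ}
    (hw : w' ∈ SP d) : (k.insertNth (sval d s) w' : Fin (d+1) → ℤ) ∈ SP (d+1) := by
  obtain ⟨hb, hnz, hinj⟩ := mem_SP.mp hw
  set w : Fin (d+1) → ℤ := k.insertNth (sval d s) w' with hwdef
  have hk : w k = sval d s := by simp [hwdef]
  have hsa : ∀ j, w (k.succAbove j) = w' j := by intro j; simp [hwdef]
  have habs : ∀ i : Fin (d+1), i ≠ k → ∃ j, k.succAbove j = i := by
    intro i hi; exact Fin.exists_succAbove_eq hi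
  rw [mem_SP]
  refine ⟨?_, ?_, ?_⟩
  · intro i
    rcases eq_or_ne i k with rfl | hik
    · rw [hk, abs_sval]; push_cast; omega
    · obtain ⟨j, rfl⟩ := habs i hik
      rw [hsa]; have := hb j; push_cast; omega
  · intro i
    rcases eq_or_ne i k with rfl | hik
    · rw [hk]; have := abs_sval d s; intro h; rw [h] at this; simp at this; omega
    · obtain ⟨j, rfl⟩ := habs i hik
      rw [hsa]; exact hnz j
  · intro i j hij
    simp only at hij
    rcases eq_or_ne i k with hik | hik <;> rcases eq_or_ne j k with hjk | hjk
    · rw [hik, hjk]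
    · exfalso; obtain ⟨j', rfl⟩ := habs j hjk
      rw [hik, hk, hsa, abs_sval] at hij
      have := hb j'; omega
    · exfalso; obtain ⟨i', rfl⟩ := habs i hik
      rw [hjk, hk, hsa, abs_sval] at hij
      have := hb i'; omega
    · obtain ⟨i', rfl⟩ := habs i hik
      obtain ⟨j', rfl⟩ := habs j hjk
      rw [hsa, hsa] at hij
      exact congrArg _ (hinj hij)

lemma exists_big {d : ℕ} {w : Fin (d+1) → ℤ} (hw : w ∈ SP (d+1)) :
    ∃ k, |w k| = (d:ℤ)+1 := by
  obtain ⟨hb, hnz, hinj⟩ := mem_SP.mp hw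
  have h1 : ∀ i, 1 ≤ |w i| := by
    intro i; have := hnz i; have := abs_nonneg (w i)
    rcases lt_or_eq_of_le (abs_nonneg (w i)) with h | h
    · omega
    · exfalso; exact hnz i (abs_eq_zero.mp h.symm)
  set f : Fin (d+1) → Fin (d+1) := fun i => ⟨(|w i|).toNat - 1, by
    have := hb i; have := h1 i; omega⟩ with hf
  have hfinj : Function.Injective f := by
    intro a b hab
    apply hinj
    simp only [hf, Fin.mk.injEq] at hab
    have ha := h1 a; have hbb := h1 b
    simp only
    omega
  have hfsurj := Finite.injective_iff_surjective.mp hfinj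
  obtain ⟨k, hk⟩ := hfsurj ⟨d, by omega⟩
  refine ⟨k, ?_⟩
  simp only [hf, Fin.mk.injEq] at hk
  have := h1 k; have := hb k
  omega

lemma removeNth_mem_SP {d : ℕ} {w : Fin (d+1) → ℤ} (hw : w ∈ SP (d+1))
    {k : Fin (d+1)} (hk : |w k| = (d:ℤ)+1) : (k.removeNth w : Fin d → ℤ) ∈ SP d := by
  obtain ⟨hb, hnz, hinj⟩ := mem_SP.mp hw
  rw [mem_SP]
  refine ⟨?_, fun i => hnz _, fun i j hij => ?_⟩
  · intro i
    have hb' := hb (k.succAbove i)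
    have hne : k.succAbove i ≠ k := Fin.succAbove_ne k i
    have : |w (k.succAbove i)| ≠ (d:ℤ)+1 := by
      intro h; exact hne (hinj (h.trans hk.symm))
    simp only [Fin.removeNth]
    push_cast at hb' ⊢
    omega
  · have := hinj hij
    exact Fin.succAbove_right_injective this


-- from e.lean

def tks (d : ℕ) (k : Fin (d+1)) (s : Bool) : ℕ := if s then d + 1 + k.val else d - k.val

lemma stat_insertNth {d : ℕ} (k : Fin (d+1)) (s : Bool) {w' : Fin d → ℤ}
    (hb : ∀ i, |w' i| ≤ d) :
    stat (d+1) (k.insertNth (sval d s) w') = stat d w' + tks d k s := by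
  rcases s with _|_
  · exact stat_insertNth_pos k w' hb
  · exact stat_insertNth_neg k w' hb

lemma sum_tks (d : ℕ) :
    ∑ p : Fin (d+1) × Bool, (X : Polynomial ℤ) ^ (tks d p.1 p.2)
      = ∑ j ∈ Finset.range (2*(d+1)), (X : Polynomial ℤ) ^ j := by
  have h2 : 2*(d+1) = (d+1) + (d+1) := by ring
  rw [h2, Finset.sum_range_add, Fintype.sum_prod_type]
  have hb : ∀ k : Fin (d+1), (∑ s : Bool, (X:Polynomial ℤ)^(tks d k s))
      = (X:Polynomial ℤ)^(d - k.val) + (X:Polynomial ℤ)^(d+1+k.val) := by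
    intro k
    rw [Fintype.sum_bool]
    have ht : tks d k true = d + 1 + k.val := rfl
    have hf : tks d k false = d - k.val := rfl
    rw [ht, hf, add_comm]
  simp only [hb]
  rw [Finset.sum_add_distrib]
  congr 1
  · rw [Fin.sum_univ_eq_sum_range (fun k => (X:Polynomial ℤ)^(d - k)) (d+1)]
    rw [← Finset.sum_range_reflect (fun j => (X:Polynomial ℤ)^j) (d+1)]
    apply Finset.sum_congr rfl
    intro j hj
    simp only [Finset.mem_range] at hj
    have h : d + 1 - 1 - j = d - j := by omega
    rw [h]
  · rw [Fin.sum_univ_eq_sum_range (fun k => (X:Polynomial ℤ)^(d+1+k)) (d+1)]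

lemma key (d : ℕ) :
    ∑ w ∈ SP d, (X : Polynomial ℤ) ^ (stat d w)
      = ∏ k ∈ Finset.range d, ∑ j ∈ Finset.range (2*(k+1)), (X : Polynomial ℤ) ^ j := by
  induction d with
  | zero =>
    have h0 : SP 0 = {fun i : Fin 0 => (i.elim0 : ℤ)} := by
      ext w
      simp only [mem_SP, Finset.mem_singleton]
      constructor
      · intro _; funext i; exact i.elim0
      · intro _; refine ⟨fun i => i.elim0, fun i => i.elim0, fun i => i.elim0⟩
    rw [h0]
    simp [stat]
  | succ d ih =>
    rw [Finset.prod_range_succ, ← ih, ← sum_tks d]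
    have hbij : ∑ w ∈ SP (d+1), (X : Polynomial ℤ) ^ (stat (d+1) w)
        = ∑ a ∈ ((univ : Finset (Fin (d+1) × Bool)) ×ˢ SP d),
            (X : Polynomial ℤ) ^ (stat d a.2 + tks d a.1.1 a.1.2) := by
      symm
      apply Finset.sum_bij (i := fun a _ => (a.1.1.insertNth (sval d a.1.2) a.2 : Fin (d+1) → ℤ))
      · intro a ha
        simp only [Finset.mem_product, Finset.mem_univ, true_and] at ha
        exact insertNth_mem_SP a.1.1 a.1.2 ha
      · -- injectivity
        intro a ha b hb hab
        simp only [Finset.mem_product, Finset.mem_univ, true_and] at ha hb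
        obtain ⟨⟨k1, s1⟩, w1⟩ := a
        obtain ⟨⟨k2, s2⟩, w2⟩ := b
        simp only at hab ⊢
        have hk : k1 = k2 := by
          by_contra hne
          obtain ⟨i, hi⟩ := Fin.exists_succAbove_eq hne
          have h1 : (k1.insertNth (sval d s1) w1 : Fin (d+1) → ℤ) k1 = sval d s1 := by simp
          rw [hab] at h1
          have h2 : (k2.insertNth (sval d s2) w2 : Fin (d+1) → ℤ) k1 = w2 i := by
            rw [← hi]; simp
          rw [h1] at h2
          have hle : |w2 i| ≤ (d:ℤ) := (mem_SP.mp hb).1 i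
          rw [← h2, abs_sval] at hle
          omega
        subst hk
        have hval : sval d s1 = sval d s2 := by
          have h1 : (k1.insertNth (sval d s1) w1 : Fin (d+1) → ℤ) k1 = sval d s1 := by simp
          have h2 : (k1.insertNth (sval d s2) w2 : Fin (d+1) → ℤ) k1 = sval d s2 := by simp
          rw [hab] at h1
          exact h1.symm.trans h2
        have hs : s1 = s2 := by
          rcases s1 with _|_ <;> rcases s2 with _|_
          · rfl
          · exfalso
            have : ((d:ℤ)+1) = -((d:ℤ)+1) := hval
            omega
          · exfalso
            have : -((d:ℤ)+1) = ((d:ℤ)+1) := hval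
            omega
          · rfl
        subst hs
        have hw : w1 = w2 := by
          have := congrArg (fun w => (k1.removeNth w : Fin d → ℤ)) hab
          simpa using this
        rw [hw]
      · -- surjectivity
        intro w hw
        obtain ⟨k, hk⟩ := exists_big hw
        have hmem := removeNth_mem_SP hw hk
        have hnz : w k ≠ 0 := (mem_SP.mp hw).2.1 k
        set s : Bool := decide (w k < 0) with hs
        have hval : w k = sval d s := by
          rcases lt_or_ge (w k) 0 with h | h
          · have hst : s = true := by simp [hs, h]
            rw [hst]
            show w k = -((d:ℤ)+1)
            rw [abs_of_nonpos (le_of_lt h)] at hk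
            omega
          · have hst : s = false := by simp [hs]; omega
            rw [hst]
            show w k = (d:ℤ)+1
            rw [abs_of_nonneg h] at hk
            omega
        refine ⟨((k, s), (k.removeNth w : Fin d → ℤ)), ?_, ?_⟩
        · simp only [Finset.mem_product, Finset.mem_univ, true_and]
          exact hmem
        · rw [← hval]
          exact Fin.insertNth_self_removeNth k w
      · intro a ha
        simp only [Finset.mem_product, Finset.mem_univ, true_and] at ha
        rw [stat_insertNth a.1.1 a.1.2 (mem_SP.mp ha).1]
    rw [hbij, Finset.sum_product, Finset.sum_comm]
    simp only [pow_add, ← Finset.mul_sum]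
    rw [← Finset.sum_mul]


-- from f.lean

variable {d : ℕ}

def pos (d : ℕ) (i : Fin d) : IccInt d := ⟨(i:ℤ)+1, by
  simp only [Finset.mem_Icc]
  have := i.isLt
  constructor <;> push_cast <;> omega⟩

lemma pos_coe (i : Fin d) : ((pos d i : IccInt d) : ℤ) = (i:ℤ)+1 := rfl

lemma pos_inj : Function.Injective (pos d) := by
  intro a b hab
  have : ((a:ℤ)+1) = ((b:ℤ)+1) := congrArg Subtype.val hab
  exact Fin.ext (by omega)

def Phi (d : ℕ) (g : Equiv.Perm (IccInt d)) (i : Fin d) : ℤ := ((g (pos d i) : ℤ))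

lemma card_pairs_bridge (P : IccInt d → IccInt d → Prop) [∀ a b, Decidable (P a b)] :
    ((univ : Finset (IccInt d × IccInt d)).filter
        (fun p => 1 ≤ (p.1:ℤ) ∧ (p.1:ℤ) < (p.2:ℤ) ∧ P p.1 p.2)).card
    = ((univ : Finset (Fin d × Fin d)).filter
        (fun q => q.1 < q.2 ∧ P (pos d q.1) (pos d q.2))).card := by
  symm
  apply Finset.card_bij (fun (q : Fin d × Fin d) _ => (pos d q.1, pos d q.2))
  · intro q hq
    simp only [Finset.mem_filter, Finset.mem_univ, true_and] at hq ⊢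
    refine ⟨by rw [pos_coe]; omega, ?_, hq.2⟩
    rw [pos_coe, pos_coe]
    have : q.1 < q.2 := hq.1
    rw [Fin.lt_def] at this
    omega
  · intro a _ b _ hab
    have h1 := congrArg Prod.fst hab
    have h2 := congrArg Prod.snd hab
    simp only at h1 h2
    exact Prod.ext (pos_inj h1) (pos_inj h2)
  · intro p hp
    simp only [Finset.mem_filter, Finset.mem_univ, true_and] at hp
    obtain ⟨h1, h2, h3⟩ := hp
    have hm1 := Finset.mem_Icc.mp p.1.2
    have hm2 := Finset.mem_Icc.mp p.2.2
    have hd1 : ((p.1:ℤ)).toNat - 1 < d := by omega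
    have hd2 : ((p.2:ℤ)).toNat - 1 < d := by omega
    set a : Fin d := ⟨((p.1:ℤ)).toNat - 1, hd1⟩
    set b : Fin d := ⟨((p.2:ℤ)).toNat - 1, hd2⟩
    have hpa : pos d a = p.1 := by
      apply Subtype.ext
      rw [pos_coe]
      simp only [a]
      push_cast
      omega
    have hpb : pos d b = p.2 := by
      apply Subtype.ext
      rw [pos_coe]
      simp only [b]
      push_cast
      omega
    refine ⟨(a, b), ?_, ?_⟩
    · simp only [Finset.mem_filter, Finset.mem_univ, true_and]
      constructor
      · rw [Fin.lt_def]; simp only [a, b]; omega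
      · rw [hpa, hpb]; exact h3
    · rw [Prod.mk.injEq]; exact ⟨hpa, hpb⟩

lemma card_single_bridge (P : IccInt d → Prop) [DecidablePred P] :
    ((univ : Finset (IccInt d)).filter (fun x : IccInt d => 1 ≤ (x:ℤ) ∧ P x)).card
    = ((univ : Finset (Fin d)).filter (fun i => P (pos d i))).card := by
  symm
  apply Finset.card_bij (fun (i : Fin d) _ => pos d i)
  · intro i hi
    simp only [Finset.mem_filter, Finset.mem_univ, true_and] at hi ⊢
    exact ⟨by rw [pos_coe]; omega, hi⟩
  · intro a _ b _ hab
    exact pos_inj hab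
  · intro x hx
    simp only [Finset.mem_filter, Finset.mem_univ, true_and] at hx
    obtain ⟨h1, h2⟩ := hx
    have hm := Finset.mem_Icc.mp x.2
    have hd1 : ((x:ℤ)).toNat - 1 < d := by omega
    set a : Fin d := ⟨((x:ℤ)).toNat - 1, hd1⟩
    have hpa : pos d a = x := by
      apply Subtype.ext
      rw [pos_coe]
      simp only [a]
      push_cast
      omega
    refine ⟨a, ?_, hpa⟩
    simp only [Finset.mem_filter, Finset.mem_univ, true_and]
    rw [hpa]; exact h2

lemma stat_eq (g : Equiv.Perm (IccInt d)) :
    ((Finset.univ.filter (fun p : IccInt d × IccInt d =>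
          1 ≤ (p.1 : ℤ) ∧ (p.1 : ℤ) < (p.2 : ℤ) ∧ ((g p.2 : ℤ) < (g p.1 : ℤ)))).card)
      + ((Finset.univ.filter (fun i : IccInt d =>
          1 ≤ (i : ℤ) ∧ (g i : ℤ) < 0)).card)
      + ((Finset.univ.filter (fun p : IccInt d × IccInt d =>
          1 ≤ (p.1 : ℤ) ∧ (p.1 : ℤ) < (p.2 : ℤ) ∧ (g p.1 : ℤ) + (g p.2 : ℤ) < 0)).card)
    = stat d (Phi d g) := by
  classical
  unfold stat
  rw [card_pairs_bridge (fun a b => ((g b : ℤ) < (g a : ℤ))),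
      card_pairs_bridge (fun a b => ((g a : ℤ) + (g b : ℤ) < 0)),
      card_single_bridge (fun x => (g x : ℤ) < 0)]
  rfl


-- from g.lean

def cond (d : ℕ) (g : Equiv.Perm (IccInt d)) : Prop :=
  ∀ i j : IccInt d, (j : ℤ) = -(i : ℤ) → ((g j : ℤ)) = -((g i : ℤ))

def zer (d : ℕ) : IccInt d := ⟨0, by simp⟩

def negE (x : IccInt d) : IccInt d := ⟨-(x:ℤ), by
  have := Finset.mem_Icc.mp x.2
  simp only [Finset.mem_Icc]
  omega⟩

lemma negE_coe (x : IccInt d) : ((negE x : IccInt d) : ℤ) = -(x:ℤ) := rfl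

lemma g_zero {g : Equiv.Perm (IccInt d)} (hg : cond d g) : ((g (zer d) : ℤ)) = 0 := by
  have := hg (zer d) (zer d) (by simp [zer])
  omega

lemma g_neg {g : Equiv.Perm (IccInt d)} (hg : cond d g) (x : IccInt d) :
    ((g (negE x) : ℤ)) = -((g x : ℤ)) := hg x (negE x) rfl

lemma Phi_mem_SP {g : Equiv.Perm (IccInt d)} (hg : cond d g) : Phi d g ∈ SP d := by
  rw [mem_SP]
  have hbound : ∀ i : Fin d, |Phi d g i| ≤ (d:ℤ) := by
    intro i
    have := Finset.mem_Icc.mp (g (pos d i)).2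
    rw [abs_le]; exact this
  have hnz : ∀ i : Fin d, Phi d g i ≠ 0 := by
    intro i h
    have h0 : ((g (pos d i) : ℤ)) = ((g (zer d) : ℤ)) := by
      rw [g_zero hg]; exact h
    have : g (pos d i) = g (zer d) := Subtype.ext h0
    have := g.injective this
    have : ((pos d i : IccInt d) : ℤ) = 0 := by rw [this]; rfl
    rw [pos_coe] at this
    omega
  refine ⟨hbound, hnz, ?_⟩
  intro a b hab
  simp only at hab
  rcases abs_eq_abs.mp hab with h | h
  · have : g (pos d a) = g (pos d b) := Subtype.ext h
    exact pos_inj (g.injective this)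
  · exfalso
    have h2 : ((g (pos d a) : ℤ)) = ((g (negE (pos d b)) : ℤ)) := by
      rw [g_neg hg]; exact h
    have := pos_coe a
    have h3 : pos d a = negE (pos d b) := g.injective (Subtype.ext h2)
    have h4 : ((pos d a : IccInt d) : ℤ) = -((pos d b : IccInt d):ℤ) := by
      rw [h3]; rfl
    rw [pos_coe, pos_coe] at h4
    omega

lemma Phi_inj {g1 g2 : Equiv.Perm (IccInt d)} (h1 : cond d g1) (h2 : cond d g2)
    (h : Phi d g1 = Phi d g2) : g1 = g2 := by
  apply Equiv.ext
  have hpos : ∀ i : Fin d, g1 (pos d i) = g2 (pos d i) := by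
    intro i
    apply Subtype.ext
    exact congrFun h i
  intro x
  have hm := Finset.mem_Icc.mp x.2
  rcases lt_trichotomy (x:ℤ) 0 with hx | hx | hx
  · -- x negative : x = negE y with y = negE x positive
    have key : ∀ z : IccInt d, 1 ≤ (z:ℤ) → g1 z = g2 z := by
      intro z hz
      have hmz := Finset.mem_Icc.mp z.2
      have hlt : ((z:ℤ)).toNat - 1 < d := by omega
      have hpz : pos d ⟨((z:ℤ)).toNat - 1, hlt⟩ = z := by
        apply Subtype.ext
        rw [pos_coe]
        push_cast
        omega
      rw [← hpz]
      exact hpos _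
    have e1 : ((g1 x : ℤ)) = -((g1 (negE x) : ℤ)) := by
      have := g_neg h1 (negE x)
      have hxx : negE (negE x) = x := by
        apply Subtype.ext; rw [negE_coe, negE_coe]; ring
      rw [hxx] at this
      omega
    have e2 : ((g2 x : ℤ)) = -((g2 (negE x) : ℤ)) := by
      have := g_neg h2 (negE x)
      have hxx : negE (negE x) = x := by
        apply Subtype.ext; rw [negE_coe, negE_coe]; ring
      rw [hxx] at this
      omega
    have e3 : g1 (negE x) = g2 (negE x) := by
      apply key
      rw [negE_coe]
      omega
    apply Subtype.ext
    rw [e1, e2, e3]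
  · have hxz : x = zer d := Subtype.ext (by rw [hx]; rfl)
    apply Subtype.ext
    rw [hxz, g_zero h1, g_zero h2]
  · -- positive
    have hlt : ((x:ℤ)).toNat - 1 < d := by omega
    have hpz : pos d ⟨((x:ℤ)).toNat - 1, hlt⟩ = x := by
      apply Subtype.ext
      rw [pos_coe]
      push_cast
      omega
    rw [← hpz]
    exact hpos _


-- from h.lean

def idx (d : ℕ) (hd : 0 < d) (z : ℤ) : Fin d := ⟨min (z.toNat - 1) (d-1), by omega⟩

lemma idx_val (hd : 0 < d) {z : ℤ} (h1 : 1 ≤ z) (h2 : z ≤ d) :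
    ((idx d hd z) : ℕ) = z.toNat - 1 := by
  simp only [idx]
  omega

lemma idx_inj (hd : 0 < d) {z1 z2 : ℤ} (h1 : 1 ≤ z1) (h1' : z1 ≤ d)
    (h2 : 1 ≤ z2) (h2' : z2 ≤ d) (h : idx d hd z1 = idx d hd z2) : z1 = z2 := by
  have := congrArg Fin.val h
  rw [idx_val hd h1 h1', idx_val hd h2 h2'] at this
  omega

lemma idx_coe_pos (hd : 0 < d) (i : Fin d) : idx d hd ((i:ℤ)+1) = i := by
  apply Fin.ext
  rw [idx_val hd (by omega) (by have := i.isLt; omega)]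
  omega

lemma Phi_surj (hd : 0 < d) {w : Fin d → ℤ} (hw : w ∈ SP d) :
    ∃ g : Equiv.Perm (IccInt d), cond d g ∧ Phi d g = w := by
  classical
  obtain ⟨hb, hnz, hinj⟩ := mem_SP.mp hw
  have hble : ∀ i, -(d:ℤ) ≤ w i ∧ w i ≤ d := by
    intro i; have := abs_le.mp (hb i); exact this
  have winj : Function.Injective w := by
    intro a b hab
    exact hinj (by simp only; rw [hab])
  have memw : ∀ i : Fin d, w i ∈ Finset.Icc (-(d:ℤ)) d := by
    intro i; rw [Finset.mem_Icc]; exact hble i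
  have memw' : ∀ i : Fin d, -(w i) ∈ Finset.Icc (-(d:ℤ)) d := by
    intro i; rw [Finset.mem_Icc]; have := hble i; omega
  have mem0 : (0:ℤ) ∈ Finset.Icc (-(d:ℤ)) d := by simp
  set F : IccInt d → IccInt d := fun x =>
    if 1 ≤ (x:ℤ) then ⟨w (idx d hd (x:ℤ)), memw _⟩
    else if (x:ℤ) ≤ -1 then ⟨-(w (idx d hd (-(x:ℤ)))), memw' _⟩
    else ⟨0, mem0⟩
    with hF
  have hFpos : ∀ (x : IccInt d), 1 ≤ (x:ℤ) → (F x : ℤ) = w (idx d hd (x:ℤ)) := by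
    intro x h
    simp only [hF, if_pos h]
  have hFneg : ∀ (x : IccInt d), (x:ℤ) ≤ -1 → (F x : ℤ) = -(w (idx d hd (-(x:ℤ)))) := by
    intro x h'
    have h : ¬ (1 ≤ (x:ℤ)) := by omega
    simp only [hF, if_neg h, if_pos h']
  have hFzero : ∀ (x : IccInt d), (x:ℤ) = 0 → (F x : ℤ) = 0 := by
    intro x hx
    have h : ¬ (1 ≤ (x:ℤ)) := by omega
    have h' : ¬ ((x:ℤ) ≤ -1) := by omega
    simp only [hF, if_neg h, if_neg h']
  have Finj : Function.Injective F := by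
    intro x y hxy
    have hmx := Finset.mem_Icc.mp x.2
    have hmy := Finset.mem_Icc.mp y.2
    have hco : (F x : ℤ) = (F y : ℤ) := congrArg Subtype.val hxy
    rcases lt_trichotomy (x:ℤ) 0 with hx | hx | hx <;>
      rcases lt_trichotomy (y:ℤ) 0 with hy | hy | hy
    · -- both negative
      rw [hFneg x (by omega), hFneg y (by omega)] at hco
      have h := winj (neg_injective hco)
      have h2 := idx_inj hd (by omega) (by omega) (by omega) (by omega) h
      apply Subtype.ext
      omega
    · rw [hFneg x (by omega), hFzero y hy] at hco
      exact absurd (neg_eq_zero.mp hco) (hnz _)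
    · -- x neg y pos
      rw [hFneg x (by omega), hFpos y (by omega)] at hco
      exfalso
      have habs : |w (idx d hd (-(x:ℤ)))| = |w (idx d hd (y:ℤ))| := by
        rw [← hco, abs_neg]
      have h := hinj habs
      rw [h] at hco
      have := hnz (idx d hd (y:ℤ))
      omega
    · rw [hFzero x hx, hFneg y (by omega)] at hco
      exact absurd (neg_eq_zero.mp hco.symm) (hnz _)
    · exact Subtype.ext (hx.trans hy.symm)
    · rw [hFzero x hx, hFpos y (by omega)] at hco
      exact absurd hco.symm (hnz _)
    · -- x pos y neg
      rw [hFpos x (by omega), hFneg y (by omega)] at hco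
      exfalso
      have habs : |w (idx d hd (x:ℤ))| = |w (idx d hd (-(y:ℤ)))| := by
        rw [hco, abs_neg]
      have h := hinj habs
      rw [h] at hco
      have := hnz (idx d hd (-(y:ℤ)))
      omega
    · rw [hFpos x (by omega), hFzero y hy] at hco
      exact absurd hco (hnz _)
    · -- both positive
      rw [hFpos x (by omega), hFpos y (by omega)] at hco
      have h := winj hco
      have h2 := idx_inj hd (by omega) (by omega) (by omega) (by omega) h
      exact Subtype.ext h2
  have Fbij : Function.Bijective F := Finite.injective_iff_bijective.mp Finj
  refine ⟨Equiv.ofBijective F Fbij, ?_, ?_⟩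
  · intro x y hxy
    show (F y : ℤ) = -(F x : ℤ)
    have hmx := Finset.mem_Icc.mp x.2
    rcases lt_trichotomy (x:ℤ) 0 with hx | hx | hx
    · rw [hFneg x (by omega), hFpos y (by omega)]
      rw [show (y:ℤ) = -(x:ℤ) from hxy]
      ring
    · rw [hFzero x hx, hFzero y (by omega)]
      ring
    · rw [hFpos x (by omega), hFneg y (by omega)]
      rw [show (-(y:ℤ)) = (x:ℤ) by omega]
  · funext i
    show (F (pos d i) : ℤ) = w i
    have hpi : ((pos d i : IccInt d) : ℤ) = (i:ℤ)+1 := pos_coe i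
    rw [hFpos (pos d i) (by rw [hpi]; omega), hpi, idx_coe_pos]

end S7

/- Poincaré polynomial of the hyperoctahedral group (Weyl group of type B_d/C_d):
`∑_{g ∈ B_d} q^{inv(g)+neg(g)+nsp(g)} = ∏_{k=1}^{d} (1 + q + ⋯ + q^{2k-1})` in `ℤ[q]`. -/
open Classical in
theorem stmt_7 (d : ℕ) (hd : 1 ≤ d) :
    ∑ g : {g : Equiv.Perm (IccInt d) //
        ∀ i j : IccInt d, (j : ℤ) = -(i : ℤ) → ((g j : ℤ)) = -((g i : ℤ))},
      (X : Polynomial ℤ) ^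
        (((Finset.univ.filter (fun p : IccInt d × IccInt d =>
              1 ≤ (p.1 : ℤ) ∧ (p.1 : ℤ) < (p.2 : ℤ) ∧ ((g.1 p.2 : ℤ) < (g.1 p.1 : ℤ)))).card)
          + ((Finset.univ.filter (fun i : IccInt d =>
              1 ≤ (i : ℤ) ∧ (g.1 i : ℤ) < 0)).card)
          + ((Finset.univ.filter (fun p : IccInt d × IccInt d =>
              1 ≤ (p.1 : ℤ) ∧ (p.1 : ℤ) < (p.2 : ℤ) ∧ (g.1 p.1 : ℤ) + (g.1 p.2 : ℤ) < 0)).card))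
      = ∏ k ∈ Finset.range d, ∑ j ∈ Finset.range (2 * (k + 1)), (X : Polynomial ℤ) ^ j := by
  classical
  rw [← S7.key d]
  apply Finset.sum_bij
    (i := fun (g : {g : Equiv.Perm (IccInt d) //
        ∀ i j : IccInt d, (j : ℤ) = -(i : ℤ) → ((g j : ℤ)) = -((g i : ℤ))}) _ => S7.Phi d g.1)
  · intro a _
    exact S7.Phi_mem_SP a.2
  · intro a _ b _ hab
    exact Subtype.ext (S7.Phi_inj a.2 b.2 hab)
  · intro w hw
    obtain ⟨g, hc, he⟩ := S7.Phi_surj hd hw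
    exact ⟨⟨g, hc⟩, Finset.mem_univ _, he⟩
  · intro a _
    exact congrArg (fun n => (X : Polynomial ℤ) ^ n) (S7.stat_eq a.1)
end

section
/- Let d ≥ 1 and let g be a bijection of the integer interval [-d..d] with g(-i) = -g(i) for all i. Then inv(g) + #{(i,j) : 1 ≤ i ≤ j ≤ d, g(-i) > g(j)} = (1/2) · #{(i,j) ∈ [1..d] × [-d..d] : (i < j and g(i) > g(j)) or (i > j and g(i) < g(j))}, where inv(g) = #{(i,j) : 1 ≤ i < j ≤ d, g(i) > g(j)}. In particular the cardinality of the set on the right-hand side is even. -/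
private lemma stmt10_swap_card (s : Finset ℤ) (P : ℤ → ℤ → Prop) [DecidableRel P] :
    ((s ×ˢ s).filter (fun p => P p.1 p.2)).card
      = ((s ×ˢ s).filter (fun p => P p.2 p.1)).card := by
  apply Finset.card_nbij' (fun p => (p.2, p.1)) (fun p => (p.2, p.1)) <;>
    simp +contextual [Set.MapsTo, Set.LeftInvOn, Set.RightInvOn, Finset.mem_filter, Finset.mem_product, and_comm, and_assoc]

/-- For a signed permutation `g` of `[-d..d]`,
`2·(inv(g) + #{(i,j) : 1 ≤ i ≤ j ≤ d, g(-i) > g(j)})` equals the symmetrized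
inversion count `#{(i,j) ∈ [1..d]×[-d..d] : (i<j ∧ g(i)>g(j)) ∨ (i>j ∧ g(i)<g(j))}`;
in particular the latter is even. -/
theorem stmt_10 (d : ℤ) (hd : 1 ≤ d) (g : ℤ → ℤ)
    (hbij : Set.BijOn g (Set.Icc (-d) d) (Set.Icc (-d) d))
    (hneg : ∀ i ∈ Set.Icc (-d) d, g (-i) = - g i) :
    2 * (((Finset.Icc 1 d ×ˢ Finset.Icc 1 d).filter
            (fun p => p.1 < p.2 ∧ g p.2 < g p.1)).card
         + ((Finset.Icc 1 d ×ˢ Finset.Icc 1 d).filter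
            (fun p => p.1 ≤ p.2 ∧ g p.2 < g (-p.1))).card)
      = ((Finset.Icc 1 d ×ˢ Finset.Icc (-d) d).filter
            (fun p => (p.1 < p.2 ∧ g p.2 < g p.1) ∨ (p.2 < p.1 ∧ g p.1 < g p.2))).card := by
  classical
  have hg0 : g 0 = 0 := by
    have h := hneg 0 ⟨by omega, by omega⟩
    simp at h; omega
  have hneg' : ∀ i, 1 ≤ i → i ≤ d → g (-i) = - g i := fun i h1 h2 =>
    hneg i ⟨by omega, h2⟩
  set S := Finset.Icc (1:ℤ) d with hSdef
  have hmemS : ∀ i : ℤ, i ∈ S ↔ 1 ≤ i ∧ i ≤ d := by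
    intro i; simp [hSdef, Finset.mem_Icc]
  set inv := ((S ×ˢ S).filter (fun p => p.1 < p.2 ∧ g p.2 < g p.1)).card with hinv
  set M := ((S ×ˢ S).filter (fun p => p.1 < p.2 ∧ g p.1 + g p.2 < 0)).card with hM
  set B := (S.filter (fun i => g i < 0)).card with hB
  -- diagonal count
  have hdiag : ((S ×ˢ S).filter (fun p => p.1 = p.2 ∧ g p.1 + g p.2 < 0)).card = B := by
    rw [hB]
    apply Finset.card_nbij' (fun p => p.1) (fun i => (i, i)) <;>
      simp +contextual [Set.MapsTo, Set.LeftInvOn, Set.RightInvOn, Finset.mem_filter, Finset.mem_product] <;> omega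
  -- the second LHS term equals M + B
  have hN : ((S ×ˢ S).filter (fun p => p.1 ≤ p.2 ∧ g p.2 < g (-p.1))).card = M + B := by
    have h1 : (S ×ˢ S).filter (fun p => p.1 ≤ p.2 ∧ g p.2 < g (-p.1))
        = (S ×ˢ S).filter (fun p => (p.1 < p.2 ∧ g p.1 + g p.2 < 0)
            ∨ (p.1 = p.2 ∧ g p.1 + g p.2 < 0)) := by
      apply Finset.filter_congr
      intro p hp
      simp only [Finset.mem_product, hmemS] at hp
      rw [hneg' p.1 hp.1.1 hp.1.2]
      constructor
      · rintro ⟨h, h'⟩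
        rcases eq_or_lt_of_le h with h | h
        · exact Or.inr ⟨h, by omega⟩
        · exact Or.inl ⟨h, by omega⟩
      · rintro (⟨h, h'⟩ | ⟨h, h'⟩) <;> constructor <;> omega
    rw [h1, Finset.filter_or, Finset.card_union_of_disjoint, hdiag, hM]
    · rw [Finset.disjoint_filter]
      rintro p _ ⟨h, _⟩ ⟨h', _⟩; omega
  -- swap versions
  have hMswap : ((S ×ˢ S).filter (fun p => p.2 < p.1 ∧ g p.1 + g p.2 < 0)).card = M := by
    rw [hM]
    apply Finset.card_nbij' (fun p => (p.2, p.1)) (fun p => (p.2, p.1))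
    · intro p hp
      simp only [Finset.mem_coe, Finset.mem_filter, Finset.mem_product] at hp ⊢
      exact ⟨⟨hp.1.2, hp.1.1⟩, hp.2.1, by omega⟩
    · intro p hp
      simp only [Finset.mem_coe, Finset.mem_filter, Finset.mem_product] at hp ⊢
      exact ⟨⟨hp.1.2, hp.1.1⟩, hp.2.1, by omega⟩
    · intro p _; rfl
    · intro p _; rfl
  have hinvswap : ((S ×ˢ S).filter (fun p => p.2 < p.1 ∧ g p.1 < g p.2)).card = inv := by
    rw [hinv]
    exact stmt10_swap_card S (fun a b => b < a ∧ g a < g b)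
  -- split the RHS interval
  have hT : Finset.Icc (-d) d = Finset.Icc (-d) (-1) ∪ (Finset.Icc 0 0 ∪ S) := by
    ext x; simp [hSdef, Finset.mem_Icc]; omega
  set P : ℤ × ℤ → Prop := fun p => (p.1 < p.2 ∧ g p.2 < g p.1) ∨ (p.2 < p.1 ∧ g p.1 < g p.2)
    with hP
  have hsplit : ((S ×ˢ Finset.Icc (-d) d).filter P).card
      = ((S ×ˢ Finset.Icc (-d) (-1)).filter P).card
        + (((S ×ˢ Finset.Icc 0 0).filter P).card + ((S ×ˢ S).filter P).card) := by
    rw [hT, Finset.product_union, Finset.product_union, Finset.filter_union,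
      Finset.filter_union, Finset.card_union_of_disjoint, Finset.card_union_of_disjoint]
    · rw [Finset.disjoint_left]
      intro p hp hp'
      simp only [Finset.mem_filter, Finset.mem_product, hmemS, Finset.mem_Icc] at hp hp'
      omega
    · rw [Finset.disjoint_left]
      intro p hp hp'
      simp only [Finset.mem_filter, Finset.mem_product, Finset.mem_union, hmemS,
        Finset.mem_Icc] at hp hp'
      omega
  -- negative part
  have hnegpart : ((S ×ˢ Finset.Icc (-d) (-1)).filter P).card
      = ((S ×ˢ S).filter (fun p => g p.1 + g p.2 < 0)).card := by
    apply Finset.card_nbij' (fun p => (p.1, -p.2)) (fun p => (p.1, -p.2))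
    · intro p hp
      simp only [Finset.mem_coe, Finset.mem_filter, Finset.mem_product, hmemS, Finset.mem_Icc, hP] at hp ⊢
      obtain ⟨⟨h1, h2⟩, h3⟩ := hp
      refine ⟨⟨h1, by omega⟩, ?_⟩
      have := hneg' (-p.2) (by omega) (by omega)
      rcases h3 with ⟨h, h'⟩ | ⟨h, h'⟩
      · omega
      · simp at this; omega
    · intro p hp
      simp only [Finset.mem_coe, Finset.mem_filter, Finset.mem_product, hmemS, Finset.mem_Icc, hP] at hp ⊢
      obtain ⟨⟨h1, h2⟩, h3⟩ := hp
      refine ⟨⟨h1, by omega⟩, Or.inr ⟨by omega, ?_⟩⟩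
      have := hneg' p.2 h2.1 h2.2
      omega
    · intro p _; simp only [neg_neg]
    · intro p _; simp only [neg_neg]
  have hC : ((S ×ˢ S).filter (fun p => g p.1 + g p.2 < 0)).card = M + M + B := by
    have h1 : (S ×ˢ S).filter (fun p => g p.1 + g p.2 < 0)
        = (S ×ˢ S).filter (fun p => (p.1 < p.2 ∧ g p.1 + g p.2 < 0)
            ∨ ((p.1 = p.2 ∧ g p.1 + g p.2 < 0) ∨ (p.2 < p.1 ∧ g p.1 + g p.2 < 0))) := by
      apply Finset.filter_congr
      intro p _
      constructor
      · intro h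
        rcases lt_trichotomy p.1 p.2 with hc | hc | hc
        · exact Or.inl ⟨hc, h⟩
        · exact Or.inr (Or.inl ⟨hc, h⟩)
        · exact Or.inr (Or.inr ⟨hc, h⟩)
      · rintro (⟨_, h⟩ | ⟨_, h⟩ | ⟨_, h⟩) <;> exact h
    rw [h1, Finset.filter_or, Finset.filter_or, Finset.card_union_of_disjoint,
      Finset.card_union_of_disjoint, hdiag, hMswap, hM]
    · omega
    · rw [Finset.disjoint_left]
      intro p hp hp'
      obtain ⟨-, h⟩ := Finset.mem_filter.mp hp
      obtain ⟨-, h'⟩ := Finset.mem_filter.mp hp'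
      omega
    · rw [Finset.disjoint_left]
      intro p hp hp'
      obtain ⟨-, h⟩ := Finset.mem_filter.mp hp
      rcases Finset.mem_union.mp hp' with h' | h' <;>
        obtain ⟨-, h'⟩ := Finset.mem_filter.mp h' <;> omega
  -- zero part
  have hzero : ((S ×ˢ Finset.Icc 0 0).filter P).card = B := by
    rw [hB]
    apply Finset.card_nbij' (fun p => p.1) (fun i => (i, 0))
    · intro p hp
      simp only [Finset.mem_coe, Finset.mem_filter, Finset.mem_product, hmemS, Finset.mem_Icc, hP] at hp ⊢
      obtain ⟨⟨h1, h2⟩, h3⟩ := hp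
      refine ⟨h1, ?_⟩
      rcases h3 with ⟨h, h'⟩ | ⟨h, h'⟩
      · omega
      · have hp2 : p.2 = 0 := by omega
        rw [hp2] at h'
        omega
    · intro i hi
      simp only [Finset.mem_coe, Finset.mem_filter, hmemS, Finset.mem_Icc, Finset.mem_product, hP] at hi ⊢
      exact ⟨⟨hi.1, by omega⟩, Or.inr ⟨by omega, by rw [hg0]; exact hi.2⟩⟩
    · intro p hp
      simp only [Finset.mem_coe, Finset.mem_filter, Finset.mem_product, Finset.mem_Icc] at hp
      have : p.2 = 0 := by omega
      exact Prod.ext rfl this.symm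
    · intro i _; rfl
  -- positive part
  have hpos : ((S ×ˢ S).filter P).card = inv + inv := by
    simp only [hP]
    rw [Finset.filter_or, Finset.card_union_of_disjoint, hinvswap, hinv]
    rw [Finset.disjoint_left]
    intro p hp hp'
    obtain ⟨-, h⟩ := Finset.mem_filter.mp hp
    obtain ⟨-, h'⟩ := Finset.mem_filter.mp hp'
    omega
  rw [hN, hsplit, hnegpart, hC, hzero, hpos, hinv]
  omega
end

section
/- Let d ≥ 1 and let g be a bijection of [-d..d] with g(-i) = -g(i) for all i. Define inv(g) = #{(i,j) : 1 ≤ i < j ≤ d, g(i) > g(j)} and neg(g) = #{i ∈ [1..d] : g(i) < 0}. Then inv(g) + #{(i,j) : 1 ≤ i < j ≤ d, g(-i) > g(j)} = (1/2) · #{(i,j) ∈ [1..d] × [-d..d] : (i < j and g(i) > g(j)) or (i > j and g(i) < g(j))} - neg(g). -/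
/-- For a signed permutation `g` of `[-d..d]`,
`inv(g) + #{(i,j) : 1 ≤ i < j ≤ d, g(-i) > g(j)}` equals
`(1/2)·#{(i,j) ∈ [1..d]×[-d..d] : (i<j ∧ g(i)>g(j)) ∨ (i>j ∧ g(i)<g(j))} - neg(g)`,
stated multiplied through by 2. -/
theorem stmt_11 (d : ℤ) (hd : 1 ≤ d) (g : ℤ → ℤ)
    (hbij : Set.BijOn g (Set.Icc (-d) d) (Set.Icc (-d) d))
    (hneg : ∀ i ∈ Set.Icc (-d) d, g (-i) = - g i) :
    2 * (((Finset.Icc 1 d ×ˢ Finset.Icc 1 d).filter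
            (fun p => p.1 < p.2 ∧ g p.2 < g p.1)).card
         + ((Finset.Icc 1 d ×ˢ Finset.Icc 1 d).filter
            (fun p => p.1 < p.2 ∧ g p.2 < g (-p.1))).card)
      + 2 * ((Finset.Icc 1 d).filter (fun i => g i < 0)).card
      = ((Finset.Icc 1 d ×ˢ Finset.Icc (-d) d).filter
            (fun p => (p.1 < p.2 ∧ g p.2 < g p.1) ∨ (p.2 < p.1 ∧ g p.1 < g p.2))).card := by
  clear hbij
  have hg0 : g 0 = 0 := by
    have h := hneg 0 ⟨by linarith, by linarith⟩
    simp only [neg_zero] at h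
    linarith
  have hgi : ∀ i : ℤ, 1 ≤ i → i ≤ d → g (-i) = - g i := fun i h1 h2 =>
    hneg i ⟨by linarith, h2⟩
  set I := Finset.Icc (1:ℤ) d with hI
  have hmemI : ∀ x : ℤ, x ∈ I ↔ 1 ≤ x ∧ x ≤ d := fun x => Finset.mem_Icc
  -- split the range Icc (-d) d
  have hsplit : Finset.Icc (-d) d = (Finset.Icc (-d) (-1) ∪ {0}) ∪ I := by
    ext x
    simp only [Finset.mem_union, Finset.mem_Icc, Finset.mem_singleton, hI]
    omega
  set P : ℤ × ℤ → Prop := fun p => (p.1 < p.2 ∧ g p.2 < g p.1) ∨ (p.2 < p.1 ∧ g p.1 < g p.2)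
    with hP
  have hRHS : ((I ×ˢ Finset.Icc (-d) d).filter P).card
      = ((I ×ˢ Finset.Icc (-d) (-1)).filter P).card
        + ((I ×ˢ ({0} : Finset ℤ)).filter P).card
        + ((I ×ˢ I).filter P).card := by
    rw [hsplit, Finset.product_union, Finset.product_union, Finset.filter_union,
      Finset.filter_union]
    rw [Finset.card_union_of_disjoint, Finset.card_union_of_disjoint]
    · rw [Finset.disjoint_left]
      rintro p hp1 hp2
      simp only [Finset.mem_union, Finset.mem_filter, Finset.mem_product, Finset.mem_Icc,
        Finset.mem_singleton, hI, hP] at hp1 hp2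
      omega
    · rw [Finset.disjoint_left]
      rintro p hp1 hp2
      simp only [Finset.mem_union, Finset.mem_filter, Finset.mem_product, Finset.mem_Icc,
        Finset.mem_singleton, hI, hP] at hp1 hp2
      omega
  -- the zero part
  have hzero : ((I ×ˢ ({0} : Finset ℤ)).filter P).card
      = (I.filter (fun i => g i < 0)).card := by
    apply Finset.card_nbij' (fun p => p.1) (fun i => (i, 0))
    · rintro ⟨a, b⟩ hp
      simp only [Finset.mem_coe, Finset.mem_filter, Finset.mem_product, Finset.mem_singleton, hP,
        hmemI] at hp ⊢
      obtain ⟨⟨ha, hb⟩, hpp⟩ := hp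
      subst hb
      refine ⟨ha, ?_⟩
      rcases hpp with ⟨h1, _⟩ | ⟨_, h2⟩
      · omega
      · linarith [hg0]
    · intro a ha
      simp only [Finset.mem_coe, Finset.mem_filter, Finset.mem_product, Finset.mem_singleton, hP,
        hmemI] at ha ⊢
      exact ⟨⟨ha.1, trivial⟩, Or.inr ⟨by omega, by rw [hg0]; exact ha.2⟩⟩
    · rintro ⟨a, b⟩ hp
      simp only [Finset.mem_coe, Finset.mem_filter, Finset.mem_product, Finset.mem_singleton] at hp
      simp [hp.1.2]
    · intro a _; rfl
  -- the positive part: twice the inversion count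
  have hpos : ((I ×ˢ I).filter P).card
      = 2 * ((I ×ˢ I).filter (fun p => p.1 < p.2 ∧ g p.2 < g p.1)).card := by
    have : (I ×ˢ I).filter P
        = (I ×ˢ I).filter (fun p => p.1 < p.2 ∧ g p.2 < g p.1)
          ∪ (I ×ˢ I).filter (fun p => p.2 < p.1 ∧ g p.1 < g p.2) := by
      rw [← Finset.filter_or]
    have hswap1 : ((I ×ˢ I).filter (fun p => p.2 < p.1 ∧ g p.1 < g p.2)).card
        = ((I ×ˢ I).filter (fun p => p.1 < p.2 ∧ g p.2 < g p.1)).card := by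
      apply Finset.card_nbij' Prod.swap Prod.swap
      · rintro ⟨a, b⟩ hp
        simp only [Finset.mem_coe, Finset.mem_filter, Finset.mem_product, Prod.swap_prod_mk] at hp ⊢
        exact ⟨⟨hp.1.2, hp.1.1⟩, hp.2⟩
      · rintro ⟨a, b⟩ hp
        simp only [Finset.mem_coe, Finset.mem_filter, Finset.mem_product, Prod.swap_prod_mk] at hp ⊢
        exact ⟨⟨hp.1.2, hp.1.1⟩, hp.2⟩
      · rintro ⟨a, b⟩ _; rfl
      · rintro ⟨a, b⟩ _; rfl
    rw [this, Finset.card_union_of_disjoint, hswap1]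
    · ring
    · rw [Finset.disjoint_left]
      rintro p hp1 hp2
      simp only [Finset.mem_filter] at hp1 hp2
      omega
  -- the negative part
  set Q : ℤ × ℤ → Prop := fun p => g p.1 + g p.2 < 0 with hQ
  have hnegpart : ((I ×ˢ Finset.Icc (-d) (-1)).filter P).card = ((I ×ˢ I).filter Q).card := by
    apply Finset.card_nbij' (fun p => (p.1, -p.2)) (fun p => (p.1, -p.2))
    · rintro ⟨a, b⟩ hp
      simp only [Finset.mem_coe, Finset.mem_filter, Finset.mem_product, Finset.mem_Icc, hP, hQ,
        hmemI] at hp ⊢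
      obtain ⟨⟨ha, hb⟩, hpp⟩ := hp
      refine ⟨⟨ha, by omega⟩, ?_⟩
      have hgb : g b = - g (-b) := by
        have := hgi (-b) (by omega) (by omega)
        rw [neg_neg] at this
        linarith
      rcases hpp with ⟨h1, _⟩ | ⟨_, h2⟩
      · omega
      · linarith
    · rintro ⟨a, b⟩ hp
      simp only [Finset.mem_coe, Finset.mem_filter, Finset.mem_product, Finset.mem_Icc, hP, hQ,
        hmemI] at hp ⊢
      obtain ⟨⟨ha, hb⟩, hq⟩ := hp
      refine ⟨⟨ha, by omega⟩, Or.inr ⟨by omega, ?_⟩⟩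
      have := hgi b hb.1 hb.2
      linarith
    · rintro ⟨a, b⟩ _; simp
    · rintro ⟨a, b⟩ _; simp
  have hQsplit : ((I ×ˢ I).filter Q).card
      = 2 * ((I ×ˢ I).filter (fun p => p.1 < p.2 ∧ g p.2 < g (-p.1))).card
        + (I.filter (fun i => g i < 0)).card := by
    have hBeq : (I ×ˢ I).filter (fun p => Q p ∧ p.1 < p.2)
        = (I ×ˢ I).filter (fun p => p.1 < p.2 ∧ g p.2 < g (-p.1)) := by
      apply Finset.filter_congr
      rintro ⟨a, b⟩ hp
      simp only [Finset.mem_product, hmemI] at hp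
      have := hgi a hp.1.1 hp.1.2
      simp only [hQ, this]
      constructor
      · rintro ⟨h1, h2⟩; exact ⟨h2, by linarith⟩
      · rintro ⟨h1, h2⟩; exact ⟨by linarith, h1⟩
    have hdiag : ((I ×ˢ I).filter (fun p => Q p ∧ p.1 = p.2)).card
        = (I.filter (fun i => g i < 0)).card := by
      apply Finset.card_nbij' (fun p => p.1) (fun i => (i, i))
      · rintro ⟨a, b⟩ hp
        simp only [Finset.mem_coe, Finset.mem_filter, Finset.mem_product, hQ] at hp ⊢
        obtain ⟨⟨ha, _⟩, h1, h2⟩ := hp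
        subst h2
        exact ⟨ha, by linarith⟩
      · intro a ha
        simp only [Finset.mem_coe, Finset.mem_filter, hQ] at ha ⊢
        refine ⟨Finset.mem_product.mpr ⟨ha.1, ha.1⟩, by linarith [ha.2], by simp⟩
      · rintro ⟨a, b⟩ hp
        simp only [Finset.mem_coe, Finset.mem_filter] at hp
        simp [hp.2.2]
      · intro a _; rfl
    have hgtlt : ((I ×ˢ I).filter (fun p => Q p ∧ p.2 < p.1)).card
        = ((I ×ˢ I).filter (fun p => Q p ∧ p.1 < p.2)).card := by
      apply Finset.card_nbij' Prod.swap Prod.swap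
      · rintro ⟨a, b⟩ hp
        simp only [Finset.mem_coe, Finset.mem_filter, Finset.mem_product, Prod.swap_prod_mk, hQ] at hp ⊢
        exact ⟨⟨hp.1.2, hp.1.1⟩, by linarith [hp.2.1], hp.2.2⟩
      · rintro ⟨a, b⟩ hp
        simp only [Finset.mem_coe, Finset.mem_filter, Finset.mem_product, Prod.swap_prod_mk, hQ] at hp ⊢
        exact ⟨⟨hp.1.2, hp.1.1⟩, by linarith [hp.2.1], hp.2.2⟩
      · rintro ⟨a, b⟩ _; rfl
      · rintro ⟨a, b⟩ _; rfl
    have htri : (I ×ˢ I).filter Q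
        = ((I ×ˢ I).filter (fun p => Q p ∧ p.1 < p.2)
            ∪ (I ×ˢ I).filter (fun p => Q p ∧ p.1 = p.2))
          ∪ (I ×ˢ I).filter (fun p => Q p ∧ p.2 < p.1) := by
      rw [← Finset.filter_or, ← Finset.filter_or]
      apply Finset.filter_congr
      rintro ⟨a, b⟩ _
      constructor
      · intro h
        rcases lt_trichotomy a b with h1 | h1 | h1
        · exact Or.inl (Or.inl ⟨h, h1⟩)
        · exact Or.inl (Or.inr ⟨h, h1⟩)
        · exact Or.inr ⟨h, h1⟩
      · rintro ((⟨h, _⟩ | ⟨h, _⟩) | ⟨h, _⟩) <;> exact h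
    rw [htri, Finset.card_union_of_disjoint, Finset.card_union_of_disjoint, hgtlt,
      hBeq, hdiag]
    · ring
    · rw [Finset.disjoint_left]
      rintro p hp1 hp2
      simp only [Finset.mem_filter] at hp1 hp2
      omega
    · rw [Finset.disjoint_left]
      rintro p hp1 hp2
      simp only [Finset.mem_union, Finset.mem_filter] at hp1 hp2
      omega
  rw [hRHS, hzero, hpos, hnegpart, hQsplit]
  ring
end

section
/- Let D ≥ 1 and let g : ℤ → ℤ be a bijection with g(x + D) = g(x) + D for all x. Let i, j ∈ ℤ with i ≢ j (mod D). Then ⌊|g(i) - g(j)|/D⌋ = #{k ∈ ℤ, k ≥ 1 : g(i) > g(j + kD)} + #{k ∈ ℤ, k ≥ 1 : g(j) > g(i + kD)}. -/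
/-- For a `D`-periodic bijection `g` of ℤ and `i ≢ j (mod D)`,
`⌊|g(i)-g(j)|/D⌋ = #{k ≥ 1 : g(i) > g(j+kD)} + #{k ≥ 1 : g(j) > g(i+kD)}`. -/
theorem stmt_14 (D : ℤ) (hD : 1 ≤ D) (g : ℤ → ℤ) (hg : Function.Bijective g)
    (hper : ∀ x : ℤ, g (x + D) = g x + D) (i j : ℤ) (hij : ¬ (D ∣ i - j)) :
    |g i - g j| / D
      = (Nat.card {k : ℤ | 1 ≤ k ∧ g (j + k * D) < g i} : ℤ)
        + (Nat.card {k : ℤ | 1 ≤ k ∧ g (i + k * D) < g j} : ℤ) := by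
  have hD0 : (0:ℤ) < D := hD
  have hDne : D ≠ 0 := by omega
  -- periodicity for all k
  have gk : ∀ (k x : ℤ), g (x + k * D) = g x + k * D := by
    intro k
    induction k using Int.induction_on with
    | zero => simp
    | succ n ih =>
        intro x
        have : x + ((n:ℤ) + 1) * D = (x + n * D) + D := by ring
        rw [this, hper, ih]; ring
    | pred n ih =>
        intro x
        have h1 : x + (-(n:ℤ) - 1) * D + D = x + (-(n:ℤ)) * D := by ring
        have := hper (x + (-(n:ℤ) - 1) * D)
        rw [h1, ih] at this
        omega
  set a := g i - g j with ha
  have hDa : ¬ D ∣ a := by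
    rintro ⟨m, hm⟩
    apply hij
    have hm' : a = m * D := by rw [hm]; ring
    have : g (j + m * D) = g i := by rw [gk]; omega
    have := hg.injective this
    exact ⟨m, by rw [mul_comm]; omega⟩
  -- set descriptions
  have hs1 : {k : ℤ | 1 ≤ k ∧ g (j + k * D) < g i}
      = ↑(Finset.Icc (1:ℤ) ((a - 1) / D)) := by
    ext k
    simp only [Set.mem_setOf_eq, Finset.coe_Icc, Set.mem_Icc, gk]
    constructor
    · rintro ⟨h1, h2⟩
      refine ⟨h1, ?_⟩
      rw [Int.le_ediv_iff_mul_le hD0]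
      omega
    · rintro ⟨h1, h2⟩
      rw [Int.le_ediv_iff_mul_le hD0] at h2
      exact ⟨h1, by omega⟩
  have hs2 : {k : ℤ | 1 ≤ k ∧ g (i + k * D) < g j}
      = ↑(Finset.Icc (1:ℤ) ((-a - 1) / D)) := by
    ext k
    simp only [Set.mem_setOf_eq, Finset.coe_Icc, Set.mem_Icc, gk]
    constructor
    · rintro ⟨h1, h2⟩
      refine ⟨h1, ?_⟩
      rw [Int.le_ediv_iff_mul_le hD0]
      omega
    · rintro ⟨h1, h2⟩
      rw [Int.le_ediv_iff_mul_le hD0] at h2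
      exact ⟨h1, by omega⟩
  rw [hs1, hs2]
  rw [Nat.card_coe_set_eq, Nat.card_coe_set_eq, Set.ncard_coe_finset,
    Set.ncard_coe_finset, Int.card_Icc, Int.card_Icc]
  -- now pure arithmetic
  set q := a / D with hq
  set r := a % D with hr
  have hdecomp : D * q + r = a := Int.mul_ediv_add_emod a D
  have hr0 : 0 ≤ r := Int.emod_nonneg a hDne
  have hrD : r < D := Int.emod_lt_of_pos a hD0
  have hrne : r ≠ 0 := by
    intro h
    exact hDa (Int.dvd_of_emod_eq_zero h)
  have e1 : (a - 1) / D = q := by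
    have : a - 1 = (r - 1) + q * D := by linarith [hdecomp]
    rw [this, Int.add_mul_ediv_right _ _ hDne,
      Int.ediv_eq_zero_of_lt (by omega) (by omega), zero_add]
  have e2 : (-a - 1) / D = -q - 1 := by
    have : -a - 1 = (D - r - 1) + (-q - 1) * D := by linarith [hdecomp]
    rw [this, Int.add_mul_ediv_right _ _ hDne,
      Int.ediv_eq_zero_of_lt (by omega) (by omega), zero_add]
  rw [e1, e2]
  rcases le_or_gt 0 q with hq0 | hq0
  · have haq : 0 ≤ a := by nlinarith
    rw [abs_of_nonneg haq]
    have h1 : ((q + 1 - 1).toNat : ℤ) = q := by omega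
    have h2 : ((-q - 1 + 1 - 1).toNat : ℤ) = 0 := by omega
    rw [h1, h2, ← hq]
    omega
  · have haq : a < 0 := by nlinarith
    rw [abs_of_neg (by omega)]
    have e3 : (-a) / D = -q - 1 := by
      have : -a = (D - r) + (-q - 1) * D := by linarith [hdecomp]
      rw [this, Int.add_mul_ediv_right _ _ hDne,
        Int.ediv_eq_zero_of_lt (by omega) (by omega), zero_add]
    rw [e3]
    omega
end

section
/- Let d ≥ 1 and let g : ℤ → ℤ be a bijection satisfying g(i + d) = g(i) + d for all i ∈ ℤ and ∑_{i=1}^{d} g(i) = d(d+1)/2. Then ∑_{1 ≤ i < j ≤ d} |⌊(g(j) - g(i))/d⌋| = (1/2) · #{(i, m) ∈ [1..d] × ℤ : (i < m and g(i) > g(m)) or (i > m and g(i) < g(m))}. -/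
private lemma ediv_key {d : ℤ} (hd : 0 < d) (s q : ℤ) (h0 : 0 ≤ s) (h1 : s < d) :
    (s + q * d) / d = q := by
  rw [Int.add_mul_ediv_right _ _ hd.ne', Int.ediv_eq_zero_of_lt h0 h1, zero_add]

private lemma ediv_eq {d : ℤ} (hd0 : 0 < d) {x : ℤ} (s q : ℤ) (hx : x = s + q * d)
    (h0 : 0 ≤ s) (h1 : s < d) : x / d = q := by
  rw [hx]; exact ediv_key hd0 s q h0 h1

private lemma perk {d : ℤ} {g : ℤ → ℤ} (hper : ∀ i : ℤ, g (i + d) = g i + d) :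
    ∀ (k i : ℤ), g (i + d * k) = g i + d * k := by
  intro k
  induction k using Int.induction_on with
  | zero => simp
  | succ n ih =>
      intro i
      have h1 := hper (i + d * (n:ℤ))
      have h2 := ih i
      have e1 : i + d * ((n:ℤ) + 1) = i + d * (n:ℤ) + d := by ring
      rw [e1, h1, h2]; ring
  | pred n ih =>
      intro i
      have h1 := hper (i + d * (-(n:ℤ) - 1))
      have h2 := ih i
      have e1 : i + d * (-(n:ℤ) - 1) + d = i + d * (-(n:ℤ)) := by ring
      rw [e1, h2] at h1
      linarith

private noncomputable def nab (d : ℤ) (g : ℤ → ℤ) (i r : ℤ) : ℕ :=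
  (Finset.Icc ((i - r)/d + 1) ((g i - g r - 1)/d)).card
  + (Finset.Icc ((g i - g r)/d + 1) ((i - r - 1)/d)).card

private lemma nab_diag {d : ℤ} (hd0 : 0 < d) (g : ℤ → ℤ) (i : ℤ) : nab d g i i = 0 := by
  have e0 : (i - i : ℤ) = 0 := by ring
  have e1 : ((-1 : ℤ)) / d = -1 := ediv_eq hd0 (d - 1) (-1) (by ring) (by omega) (by omega)
  have e2 : (0:ℤ) / d = 0 := Int.zero_ediv d
  unfold nab
  rw [e0]
  rw [show g i - g i - 1 = -1 by ring, show g i - g i = 0 by ring,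
      show (0:ℤ) - 1 = -1 by ring, e1, e2]
  simp

private lemma nab_pair {d : ℤ} (hd0 : 0 < d) (g : ℤ → ℤ) {i r : ℤ}
    (h1 : 1 ≤ i) (h2 : i ≤ d) (h3 : 1 ≤ r) (h4 : r ≤ d) (hir : i < r)
    (hnd : ¬ (d ∣ g r - g i)) :
    (nab d g i r : ℤ) + (nab d g r i : ℤ) = 2 * |(g r - g i) / d| := by
  have hdf : d * ((g r - g i) / d) + (g r - g i) % d = g r - g i := Int.mul_ediv_add_emod _ _
  set f : ℤ := (g r - g i) / d with hf
  set s : ℤ := (g r - g i) % d with hs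
  have hs0 : 0 ≤ s := Int.emod_nonneg _ hd0.ne'
  have hsd : s < d := Int.emod_lt_of_pos _ hd0
  have hsne : s ≠ 0 := by
    intro h0
    exact hnd ⟨f, by linarith⟩
  have e1 : (i - r) / d = -1 := ediv_eq hd0 (i - r + d) (-1) (by ring) (by omega) (by omega)
  have e2 : (r - i) / d = 0 := ediv_eq hd0 (r - i) 0 (by ring) (by omega) (by omega)
  have e3 : (g i - g r - 1) / d = -f - 1 :=
    ediv_eq hd0 (d - s - 1) (-f - 1) (by linarith) (by omega) (by omega)
  have e4 : (g r - g i - 1) / d = f :=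
    ediv_eq hd0 (s - 1) f (by linarith) (by omega) (by omega)
  have e5 : (g i - g r) / d = -f - 1 :=
    ediv_eq hd0 (d - s) (-f - 1) (by linarith) (by omega) (by omega)
  have e7 : (i - r - 1) / d = -1 :=
    ediv_eq hd0 (i - r - 1 + d) (-1) (by ring) (by omega) (by omega)
  have e8 : (r - i - 1) / d = 0 :=
    ediv_eq hd0 (r - i - 1) 0 (by ring) (by omega) (by omega)
  unfold nab
  rw [e1, e3, e5, e7, e2, e4, e8]
  rw [Int.card_Icc, Int.card_Icc, Int.card_Icc, Int.card_Icc]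
  push_cast
  rcases abs_cases f with ⟨h,h'⟩|⟨h,h'⟩ <;> omega

private lemma inner_count {d : ℤ} {g : ℤ → ℤ} (hd0 : 0 < d)
    (hperk : ∀ (k i : ℤ), g (i + d * k) = g i + d * k) (C K : ℤ) (hC0 : 0 ≤ C)
    (hK : K = 2*C + d + 1)
    (hgb : ∀ i r, 1 ≤ i → i ≤ d → 1 ≤ r → r ≤ d → g i - g r ≤ 2*C + d - 1)
    (i r : ℤ) (h1 : 1 ≤ i) (h2 : i ≤ d) (h3 : 1 ≤ r) (h4 : r ≤ d) :
    ((Finset.Icc (-K) K).filter (fun k =>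
        (i < r + d * k ∧ g (r + d * k) < g i) ∨ (r + d * k < i ∧ g i < g (r + d * k)))).card
      = nab d g i r := by
  classical
  have hb1 := hgb i r h1 h2 h3 h4
  have hb2 := hgb r i h3 h4 h1 h2
  have hA : (Finset.Icc (-K) K).filter (fun k => i < r + d * k ∧ g (r + d * k) < g i)
      = Finset.Icc ((i - r)/d + 1) ((g i - g r - 1)/d) := by
    ext k
    simp only [Finset.mem_filter, Finset.mem_Icc, hperk k r]
    constructor
    · rintro ⟨⟨hk1, hk2⟩, hlt, hglt⟩
      constructor
      · by_contra hcon
        push_neg at hcon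
        have hle : k ≤ (i - r)/d := by omega
        have := (Int.le_ediv_iff_mul_le hd0).mp hle
        nlinarith
      · rw [Int.le_ediv_iff_mul_le hd0]
        nlinarith
    · rintro ⟨hkl, hku⟩
      have hklo : i - r < k * d := by
        by_contra hcon
        push_neg at hcon
        have := (Int.le_ediv_iff_mul_le hd0).mpr hcon
        omega
      have hkup : k * d ≤ g i - g r - 1 := (Int.le_ediv_iff_mul_le hd0).mp hku
      have hkK : k ≤ K := by
        by_contra hcon
        push_neg at hcon
        have h5 : K + 1 ≤ k := by omega
        have h6 : (K + 1) * d ≤ k * d := mul_le_mul_of_nonneg_right h5 hd0.le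
        nlinarith
      have hKk : -K ≤ k := by
        have hm1 : (-1 : ℤ) ≤ (i - r)/d := by
          rw [Int.le_ediv_iff_mul_le hd0]; nlinarith
        omega
      exact ⟨⟨hKk, hkK⟩, by nlinarith, by nlinarith⟩
  have hB : (Finset.Icc (-K) K).filter (fun k => r + d * k < i ∧ g i < g (r + d * k))
      = Finset.Icc ((g i - g r)/d + 1) ((i - r - 1)/d) := by
    ext k
    simp only [Finset.mem_filter, Finset.mem_Icc, hperk k r]
    constructor
    · rintro ⟨⟨hk1, hk2⟩, hlt, hglt⟩
      constructor
      · by_contra hcon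
        push_neg at hcon
        have hle : k ≤ (g i - g r)/d := by omega
        have := (Int.le_ediv_iff_mul_le hd0).mp hle
        nlinarith
      · rw [Int.le_ediv_iff_mul_le hd0]
        nlinarith
    · rintro ⟨hkl, hku⟩
      have hklo : g i - g r < k * d := by
        by_contra hcon
        push_neg at hcon
        have := (Int.le_ediv_iff_mul_le hd0).mpr hcon
        omega
      have hkup : k * d ≤ i - r - 1 := (Int.le_ediv_iff_mul_le hd0).mp hku
      have hkK : k ≤ K := by
        by_contra hcon
        push_neg at hcon
        have h5 : K + 1 ≤ k := by omega
        have h6 : (K + 1) * d ≤ k * d := mul_le_mul_of_nonneg_right h5 hd0.le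
        nlinarith
      have hKk : -K ≤ k := by
        have hm1 : -(2*C + d) ≤ (g i - g r)/d := by
          rw [Int.le_ediv_iff_mul_le hd0]; nlinarith
        omega
      exact ⟨⟨hKk, hkK⟩, by nlinarith, by nlinarith⟩
  have hsplit : (Finset.Icc (-K) K).filter (fun k =>
        (i < r + d * k ∧ g (r + d * k) < g i) ∨ (r + d * k < i ∧ g i < g (r + d * k)))
      = ((Finset.Icc (-K) K).filter (fun k => i < r + d * k ∧ g (r + d * k) < g i))
        ∪ ((Finset.Icc (-K) K).filter (fun k => r + d * k < i ∧ g i < g (r + d * k))) := by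
    rw [← Finset.filter_or]
  have hdisj : Disjoint
      ((Finset.Icc (-K) K).filter (fun k => i < r + d * k ∧ g (r + d * k) < g i))
      ((Finset.Icc (-K) K).filter (fun k => r + d * k < i ∧ g i < g (r + d * k))) := by
    rw [Finset.disjoint_left]
    intro k hk hk'
    simp only [Finset.mem_filter] at hk hk'
    omega
  rw [hsplit, Finset.card_union_of_disjoint hdisj, hA, hB]
  rfl

private lemma card_S {d : ℤ} {g : ℤ → ℤ} (hd0 : 0 < d) (hg : Function.Bijective g)
    (hperk : ∀ (k i : ℤ), g (i + d * k) = g i + d * k) (C K : ℤ) (hC0 : 0 ≤ C)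
    (hK : K = 2*C + d + 1)
    (hgb : ∀ i r, 1 ≤ i → i ≤ d → 1 ≤ r → r ≤ d → g i - g r ≤ 2*C + d - 1) :
    Nat.card {p : ℤ × ℤ | 1 ≤ p.1 ∧ p.1 ≤ d ∧
        ((p.1 < p.2 ∧ g p.2 < g p.1) ∨ (p.2 < p.1 ∧ g p.1 < g p.2))}
      = ((Finset.Icc 1 d ×ˢ (Finset.Icc 1 d ×ˢ Finset.Icc (-K) K)).filter (fun x =>
          (x.1 < x.2.1 + d * x.2.2 ∧ g (x.2.1 + d * x.2.2) < g x.1) ∨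
          (x.2.1 + d * x.2.2 < x.1 ∧ g x.1 < g (x.2.1 + d * x.2.2)))).card := by
  classical
  have hres : ∀ m : ℤ, ∃ r k : ℤ, 1 ≤ r ∧ r ≤ d ∧ m = r + d * k := by
    intro m
    refine ⟨m - d * ((m-1)/d), (m-1)/d, ?_, ?_, by ring⟩
    · have := Int.emod_nonneg (m-1) hd0.ne'
      rw [Int.emod_def] at this; omega
    · have := Int.emod_lt_of_pos (m-1) hd0
      rw [Int.emod_def] at this; omega
  have hST : {p : ℤ × ℤ | 1 ≤ p.1 ∧ p.1 ≤ d ∧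
        ((p.1 < p.2 ∧ g p.2 < g p.1) ∨ (p.2 < p.1 ∧ g p.1 < g p.2))}
      = ↑(((Finset.Icc 1 d ×ˢ (Finset.Icc 1 d ×ˢ Finset.Icc (-K) K)).filter (fun x =>
          (x.1 < x.2.1 + d * x.2.2 ∧ g (x.2.1 + d * x.2.2) < g x.1) ∨
          (x.2.1 + d * x.2.2 < x.1 ∧ g x.1 < g (x.2.1 + d * x.2.2)))).image
          (fun x => (x.1, x.2.1 + d * x.2.2))) := by
    ext ⟨i, m⟩
    simp only [Set.mem_setOf_eq, Finset.coe_image, Set.mem_image, Finset.mem_coe,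
      Finset.mem_filter, Finset.mem_product, Finset.mem_Icc]
    constructor
    · rintro ⟨h1, h2, hcond⟩
      obtain ⟨r, k, hr1, hr2, hm⟩ := hres m
      have hgm : g m = g r + d * k := by rw [hm, hperk]
      have hb1 := hgb i r h1 h2 hr1 hr2
      have hb2 := hgb r i hr1 hr2 h1 h2
      have hkrange : -K ≤ k ∧ k ≤ K := by
        rcases hcond with ⟨hlt, hglt⟩ | ⟨hlt, hglt⟩
        · have hdk2 : d * k ≤ 2*C + d - 2 := by linarith
          have hk0 : 0 ≤ k := by
            by_contra hcon
            push_neg at hcon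
            have : d * k ≤ d * (-1) := mul_le_mul_of_nonneg_left (by omega) hd0.le
            linarith
          constructor
          · linarith
          · have : k * 1 ≤ k * d := mul_le_mul_of_nonneg_left (by omega) hk0
            nlinarith
        · have hdk2 : -(2*C + d - 2) ≤ d * k := by linarith
          have hk0 : k ≤ 0 := by
            by_contra hcon
            push_neg at hcon
            have : d * 1 ≤ d * k := mul_le_mul_of_nonneg_left (by omega) hd0.le
            linarith
          constructor
          · have : k * d ≤ k * 1 := mul_le_mul_of_nonpos_left (by omega) hk0
            nlinarith
          · linarith
      refine ⟨(i, r, k), ⟨⟨⟨h1, h2⟩, ⟨hr1, hr2⟩, hkrange.1, hkrange.2⟩, ?_⟩, ?_⟩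
      · dsimp only
        rw [← hm]
        exact hcond
      · dsimp only
        rw [← hm]
    · rintro ⟨⟨a, b, c⟩, ⟨⟨⟨ha1, ha2⟩, ⟨hb1, hb2⟩, -, -⟩, hcond⟩, heq⟩
      have h1 : a = i := congrArg Prod.fst heq
      have h2 : b + d * c = m := congrArg Prod.snd heq
      subst h1
      rw [← h2]
      exact ⟨ha1, ha2, hcond⟩
  rw [hST, Nat.card_coe_set_eq, Set.ncard_coe_finset]
  apply Finset.card_image_of_injOn
  rintro ⟨a, b, c⟩ hx ⟨a', b', c'⟩ hy hxy
  simp only [Finset.coe_filter, Set.mem_setOf_eq, Finset.mem_product, Finset.mem_Icc] at hx hy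
  obtain ⟨⟨-, ⟨hb1, hb2⟩, -⟩, -⟩ := hx
  obtain ⟨⟨-, ⟨hb1', hb2'⟩, -⟩, -⟩ := hy
  have h1 : a = a' := congrArg Prod.fst hxy
  have h2 : b + d * c = b' + d * c' := congrArg Prod.snd hxy
  have hcc : c = c' := by
    rcases lt_trichotomy c c' with h | h | h
    · have : d * (c + 1) ≤ d * c' := mul_le_mul_of_nonneg_left (by omega) hd0.le
      linarith
    · exact h
    · have : d * (c' + 1) ≤ d * c := mul_le_mul_of_nonneg_left (by omega) hd0.le
      linarith
  subst hcc h1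
  have hbb : b = b' := by omega
  subst hbb
  rfl

private lemma card_tri {d : ℤ} {g : ℤ → ℤ} (hd0 : 0 < d)
    (hperk : ∀ (k i : ℤ), g (i + d * k) = g i + d * k) (C K : ℤ) (hC0 : 0 ≤ C)
    (hK : K = 2*C + d + 1)
    (hgb : ∀ i r, 1 ≤ i → i ≤ d → 1 ≤ r → r ≤ d → g i - g r ≤ 2*C + d - 1) :
    ((Finset.Icc 1 d ×ˢ (Finset.Icc 1 d ×ˢ Finset.Icc (-K) K)).filter (fun x =>
          (x.1 < x.2.1 + d * x.2.2 ∧ g (x.2.1 + d * x.2.2) < g x.1) ∨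
          (x.2.1 + d * x.2.2 < x.1 ∧ g x.1 < g (x.2.1 + d * x.2.2)))).card
      = ∑ i ∈ Finset.Icc 1 d, ∑ r ∈ Finset.Icc 1 d, nab d g i r := by
  classical
  rw [Finset.card_filter, Finset.sum_product]
  refine Finset.sum_congr rfl fun i hi => ?_
  rw [Finset.sum_product]
  refine Finset.sum_congr rfl fun r hr => ?_
  rw [Finset.mem_Icc] at hi hr
  rw [← inner_count hd0 hperk C K hC0 hK hgb i r hi.1 hi.2 hr.1 hr.2, Finset.card_filter]

/-- Length formula for the affine symmetric group:
`∑_{1 ≤ i < j ≤ d} |⌊(g(j)-g(i))/d⌋|` equals half of the symmetrized affine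
inversion count of `g` over `[1..d] × ℤ` (stated multiplied through by 2). -/
theorem stmt_15 (d : ℤ) (hd : 1 ≤ d) (g : ℤ → ℤ) (hg : Function.Bijective g)
    (hper : ∀ i : ℤ, g (i + d) = g i + d)
    (hsum : 2 * ∑ i ∈ Finset.Icc 1 d, g i = d * (d + 1)) :
    2 * ∑ p ∈ (Finset.Icc 1 d ×ˢ Finset.Icc 1 d).filter (fun p => p.1 < p.2),
          |(g p.2 - g p.1) / d|
      = (Nat.card {p : ℤ × ℤ | 1 ≤ p.1 ∧ p.1 ≤ d ∧
          ((p.1 < p.2 ∧ g p.2 < g p.1) ∨ (p.2 < p.1 ∧ g p.1 < g p.2))} : ℤ) := by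
  classical
  clear hsum
  have hd0 : (0:ℤ) < d := by omega
  have hperk := perk hper
  set C : ℤ := ∑ i ∈ Finset.Icc 1 d, |g i - i| with hC
  have hC0 : 0 ≤ C := Finset.sum_nonneg fun i _ => abs_nonneg _
  have hCb : ∀ i, 1 ≤ i → i ≤ d → |g i - i| ≤ C := by
    intro i h1 h2
    rw [hC]
    exact Finset.single_le_sum (f := fun j => |g j - j|) (fun j _ => abs_nonneg _)
      (Finset.mem_Icc.mpr ⟨h1, h2⟩)
  have hgb : ∀ i r, 1 ≤ i → i ≤ d → 1 ≤ r → r ≤ d → g i - g r ≤ 2*C + d - 1 := by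
    intro i r h1 h2 h3 h4
    have a1 := hCb i h1 h2
    have a2 := hCb r h3 h4
    rw [abs_le] at a1 a2
    omega
  have hndvd : ∀ i r, 1 ≤ i → i ≤ d → 1 ≤ r → r ≤ d → i ≠ r → ¬ (d ∣ g r - g i) := by
    rintro i r h1 h2 h3 h4 hne ⟨k, hk⟩
    have hgi : g (i + d * k) = g r := by rw [hperk]; omega
    have hr : i + d * k = r := hg.injective hgi
    rcases lt_trichotomy k 0 with h | h | h
    · have : d * k ≤ d * (-1) := mul_le_mul_of_nonneg_left (by omega) hd0.le
      linarith
    · rw [h, mul_zero, add_zero] at hr; exact hne hr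
    · have : d * 1 ≤ d * k := mul_le_mul_of_nonneg_left (by omega) hd0.le
      linarith
  -- rewrite RHS
  rw [card_S hd0 hg hperk C (2*C + d + 1) hC0 rfl hgb,
      card_tri hd0 hperk C (2*C + d + 1) hC0 rfl hgb]
  -- now pure sum manipulation
  rw [← Finset.sum_product']
  push_cast
  -- split square into <, >, =
  rw [← Finset.sum_filter_add_sum_filter_not
        (Finset.Icc 1 d ×ˢ Finset.Icc 1 d) (fun p => p.1 < p.2)
        (fun p => (nab d g p.1 p.2 : ℤ))]
  rw [← Finset.sum_filter_add_sum_filter_not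
        ((Finset.Icc 1 d ×ˢ Finset.Icc 1 d).filter (fun p => ¬ p.1 < p.2)) (fun p => p.2 < p.1)
        (fun p => (nab d g p.1 p.2 : ℤ))]
  have hdiag0 : ∑ p ∈ (((Finset.Icc 1 d ×ˢ Finset.Icc 1 d).filter
        (fun p => ¬ p.1 < p.2)).filter (fun p => ¬ p.2 < p.1)),
        (nab d g p.1 p.2 : ℤ) = 0 := by
    apply Finset.sum_eq_zero
    intro p hp
    simp only [Finset.mem_filter] at hp
    have : p.1 = p.2 := by omega
    rw [this, nab_diag hd0]
    rfl
  have hgtlt : (((Finset.Icc 1 d ×ˢ Finset.Icc 1 d).filter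
        (fun p => ¬ p.1 < p.2)).filter (fun p => p.2 < p.1))
      = (Finset.Icc 1 d ×ˢ Finset.Icc 1 d).filter (fun p => p.2 < p.1) := by
    rw [Finset.filter_filter]
    apply Finset.filter_congr
    intro p hp
    constructor
    · rintro ⟨-, h⟩; exact h
    · intro h; exact ⟨by omega, h⟩
  rw [hgtlt, hdiag0, add_zero]
  have hswap : ∑ p ∈ (Finset.Icc 1 d ×ˢ Finset.Icc 1 d).filter (fun p => p.2 < p.1),
        (nab d g p.1 p.2 : ℤ)
      = ∑ p ∈ (Finset.Icc 1 d ×ˢ Finset.Icc 1 d).filter (fun p => p.1 < p.2),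
        (nab d g p.2 p.1 : ℤ) := by
    apply Finset.sum_nbij' (i := Prod.swap) (j := Prod.swap)
    · intro a ha
      simp only [Finset.mem_filter, Finset.mem_product, Finset.mem_Icc] at ha ⊢
      exact ⟨⟨ha.1.2, ha.1.1⟩, ha.2⟩
    · intro a ha
      simp only [Finset.mem_filter, Finset.mem_product, Finset.mem_Icc] at ha ⊢
      exact ⟨⟨ha.1.2, ha.1.1⟩, ha.2⟩
    · intro a ha; rfl
    · intro a ha; rfl
    · intro a ha; rfl
  rw [hswap, ← Finset.sum_add_distrib, Finset.mul_sum]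
  apply Finset.sum_congr rfl
  intro p hp
  simp only [Finset.mem_filter, Finset.mem_product, Finset.mem_Icc] at hp
  obtain ⟨⟨⟨hp1, hp2⟩, hp3, hp4⟩, hlt⟩ := hp
  rw [← nab_pair hd0 g hp1 hp2 hp3 hp4 hlt (hndvd p.1 p.2 hp1 hp2 hp3 hp4 (by omega))]
end

section
/- Let d ≥ 1, D = 2d+2, and let g : ℤ → ℤ be a bijection with g(i + D) = g(i) + D and g(-i) = -g(i) for all i ∈ ℤ. Then (1/2)·#{(i, m) ∈ [1..d] × ℤ : (i < m ∧ g(i) > g(m)) ∨ (i > m ∧ g(i) < g(m))} = (1/2)·#{(i, m) ∈ [1..d] × [-d..d] : (i < m ∧ g(i) > g(m)) ∨ (i > m ∧ g(i) < g(m))} + ∑_{1 ≤ i ≤ j ≤ d} ( ⌊|g(i) - g(j)|/D⌋ + ⌊|g(i) + g(j)|/D⌋ ). -/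
lemma hdiv (D c s : ℤ) (hD : 0 < D) (h0 : 0 ≤ s) (h1 : s < D) : (D*c + s)/D = c := by
  rw [add_comm, Int.add_mul_ediv_left _ _ (ne_of_gt hD), Int.ediv_eq_zero_of_lt h0 h1, zero_add]

lemma val (D a b : ℤ) (hD : 0 < D) (ha0 : a ≠ 0) (ha : |a| < D) (hb : ¬ D ∣ b) :
    (((max a b - 1)/D - (min a b)/D).toNat : ℤ)
      = |b|/D + (if (0 < a ∧ b < 0) ∨ (a < 0 ∧ 0 < b) then 1 else 0) := by
  have habs := abs_lt.mp ha
  set q := b / D with hq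
  set r := b % D with hr
  have hbqr : b = D*q + r := by rw [hq, hr]; linarith [Int.emod_add_mul_ediv b D]
  have hr0 : 0 ≤ r := Int.emod_nonneg b (ne_of_gt hD)
  have hrD : r < D := Int.emod_lt_of_pos b hD
  have hrne : r ≠ 0 := fun h => hb (by rw [Int.dvd_iff_emod_eq_zero]; omega)
  have hbne : b ≠ 0 := fun h => hb (h ▸ dvd_zero D)
  have hqb : (0 < b ↔ 0 ≤ q) := by
    constructor
    · intro h; by_contra h'; push_neg at h'
      have : D*q ≤ D*(-1) := by apply mul_le_mul_of_nonneg_left; omega; omega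
      omega
    · intro h
      have : D*0 ≤ D*q := by apply mul_le_mul_of_nonneg_left; omega; omega
      omega
  have habsb : |b|/D = if 0 < b then q else -q-1 := by
    split
    · next h => rw [abs_of_pos h, hbqr, hdiv D q r hD hr0 hrD]
    · next h =>
      have : |b| = D*(-q-1) + (D - r) := by rw [abs_of_neg (by omega)]; ring_nf; omega
      rw [this, hdiv D _ _ hD (by omega) (by omega)]
  rcases lt_trichotomy a b with hab | hab | hab
  · -- a < b
    rw [max_eq_right hab.le, min_eq_left hab.le]
    have hb1 : (b-1)/D = q := by
      rw [show b - 1 = D*q + (r-1) by omega, hdiv D q _ hD (by omega) (by omega)]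
    rcases lt_trichotomy a 0 with ha1 | ha1 | ha1
    · have haD : a/D = -1 := by
        rw [show a = D*(-1) + (a+D) by ring, hdiv D _ _ hD (by omega) (by omega)]
      rw [hb1, haD, habsb]
      rcases lt_trichotomy b 0 with hb2 | hb2 | hb2
      · have hq1 : q = -1 := by
          have h1 : ¬ (0 ≤ q) := fun h => absurd (hqb.mpr h) (by omega)
          by_contra h
          have : D*q ≤ D*(-2) := by apply mul_le_mul_of_nonneg_left; omega; omega
          omega
        split_ifs <;> omega
      · exact absurd hb2 hbne
      · have hq2 : 0 ≤ q := hqb.mp hb2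
        split_ifs <;> omega
    · omega
    · have haD : a/D = 0 := Int.ediv_eq_zero_of_lt (by omega) (by omega)
      have hq2 : 0 ≤ q := hqb.mp (by omega)
      rw [hb1, haD, habsb]
      split_ifs <;> omega
  · -- a = b : impossible? no, possible; compute directly
    subst hab
    simp only [max_self, min_self]
    have hq2 : ∀ h : 0 < a, q = 0 ∨ True := fun _ => Or.inr trivial
    rcases lt_trichotomy a 0 with ha1 | ha1 | ha1
    · have haD : a/D = -1 := by
        rw [show a = D*(-1) + (a+D) by ring, hdiv D _ _ hD (by omega) (by omega)]
      have haD1 : (a-1)/D = -1 := by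
        rw [show a - 1 = D*(-1) + (a+D-1) by ring_nf, hdiv D _ _ hD (by omega) (by omega)]
      have habsD : |a|/D = 0 := Int.ediv_eq_zero_of_lt (abs_nonneg a) ha
      rw [haD, haD1, habsD]
      split_ifs <;> omega
    · omega
    · have haD : a/D = 0 := Int.ediv_eq_zero_of_lt (by omega) (by omega)
      have haD1 : (a-1)/D = 0 := Int.ediv_eq_zero_of_lt (by omega) (by omega)
      have habsD : |a|/D = 0 := Int.ediv_eq_zero_of_lt (abs_nonneg a) ha
      rw [haD, haD1, habsD]
      split_ifs <;> omega
  · -- b < a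
    rw [max_eq_left hab.le, min_eq_right hab.le]
    rcases lt_trichotomy a 0 with ha1 | ha1 | ha1
    · have haD : (a-1)/D = -1 := by
        rw [show a - 1 = D*(-1) + (a+D-1) by ring_nf, hdiv D _ _ hD (by omega) (by omega)]
      have hq2 : ¬ (0 ≤ q) := fun h => absurd (hqb.mpr h) (by omega)
      rw [haD, habsb]
      split_ifs <;> omega
    · omega
    · have haD : (a-1)/D = 0 := Int.ediv_eq_zero_of_lt (by omega) (by omega)
      rw [haD, habsb]
      rcases lt_trichotomy b 0 with hb2 | hb2 | hb2
      · have hq2 : ¬ (0 ≤ q) := fun h => absurd (hqb.mpr h) (by omega)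
        split_ifs <;> omega
      · exact absurd hb2 hbne
      · have hq2 : 0 ≤ q := hqb.mp hb2
        have hq3 : q = 0 := by
          by_contra h
          have : D*1 ≤ D*q := by apply mul_le_mul_of_nonneg_left; omega; omega
          omega
        split_ifs <;> omega
lemma diag (e x : ℤ) (he : 0 < e) (hx : ¬ e ∣ x) :
    |x|/(2*e) + |x - e|/(2*e) + (if e < x then 1 else 0) = |x| / e := by
  have hxst : x = e * (x/e) + x % e := by linarith [Int.emod_add_mul_ediv x e]
  have ht0 : 0 ≤ x % e := Int.emod_nonneg x (ne_of_gt he)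
  have htE : x % e < e := Int.emod_lt_of_pos x he
  set s := x / e with hs
  set t := x % e with ht
  clear_value s t
  have htne : t ≠ 0 := fun h => hx (by rw [Int.dvd_iff_emod_eq_zero]; omega)
  have h2e : (0:ℤ) < 2*e := by omega
  rcases Int.even_or_odd s with ⟨u, hu⟩ | ⟨u, hu⟩
  · subst hu
    rcases le_or_gt 0 u with hu0 | hu0
    · -- x > 0
      have hnn : 0 ≤ e*(u+u) := by positivity
      have hxpos : 0 < x := by omega
      have h1 : |x| = 2*e*u + t := by rw [abs_of_pos hxpos, hxst]; ring
      have h2 : |x| = e*(u+u) + t := by rw [abs_of_pos hxpos, hxst]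
      conv_rhs => rw [h2, hdiv _ _ _ he ht0 htE]
      rw [h1, hdiv _ _ _ h2e ht0 (by omega)]
      rcases le_or_gt 1 u with hu1 | hu1
      · have hee : e*2 ≤ e*(u+u) := mul_le_mul_of_nonneg_left (by omega) (by omega)
        have h3 : |x - e| = 2*e*(u-1) + (e+t) := by
          rw [abs_of_pos (by omega : (0:ℤ) < x - e), hxst]; ring
        rw [h3, hdiv _ _ _ h2e (by omega) (by omega)]
        have : e < x := by omega
        rw [if_pos this]; ring
      · have hu0' : u = 0 := by omega
        subst hu0'
        have hxt : x = t := by omega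
        have h3 : |x - e| = 2*e*0 + (e-t) := by
          rw [abs_of_neg (by omega : x - e < 0)]; omega
        rw [h3, hdiv _ _ _ h2e (by omega) (by omega)]
        rw [if_neg (by omega : ¬ e < x)]; ring
    · -- x < 0
      have hee : e*(u+u) ≤ e*(-2) := mul_le_mul_of_nonneg_left (by omega) (by omega)
      have hxneg : x < 0 := by omega
      have h1 : |x| = 2*e*(-u-1) + (2*e - t) := by rw [abs_of_neg hxneg, hxst]; ring
      have h2 : |x| = e*(-u-u-1) + (e - t) := by rw [abs_of_neg hxneg, hxst]; ring
      have h3 : |x - e| = 2*e*(-u) + (e - t) := by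
        rw [abs_of_neg (by omega : x - e < 0), hxst]; ring
      conv_rhs => rw [h2, hdiv _ _ _ he (by omega) (by omega)]
      rw [h1, hdiv _ _ _ h2e (by omega) (by omega)]
      rw [h3, hdiv _ _ _ h2e (by omega) (by omega)]
      rw [if_neg (by omega : ¬ e < x)]; ring
  · subst hu
    rcases le_or_gt 0 u with hu0 | hu0
    · have hnn : 0 ≤ e*(2*u) := by positivity
      have hx0 : e*(2*u+1) = e*(2*u) + e := by ring
      have hxpos : 0 < x := by omega
      have h1 : |x| = 2*e*u + (e+t) := by rw [abs_of_pos hxpos, hxst]; ring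
      have h2 : |x| = e*(2*u+1) + t := by rw [abs_of_pos hxpos, hxst]
      have h3 : |x - e| = 2*e*u + t := by
        rw [abs_of_nonneg (by omega : (0:ℤ) ≤ x - e), hxst]; ring
      conv_rhs => rw [h2, hdiv _ _ _ he ht0 htE]
      rw [h1, hdiv _ _ _ h2e (by omega) (by omega)]
      rw [h3, hdiv _ _ _ h2e (by omega) (by omega)]
      rw [if_pos (by omega : e < x)]; ring
    · have hee : e*(2*u) ≤ e*(-2) := mul_le_mul_of_nonneg_left (by omega) (by omega)
      have hx0 : e*(2*u+1) = e*(2*u) + e := by ring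
      have hxneg : x < 0 := by omega
      have h1 : |x| = 2*e*(-u-1) + (e - t) := by rw [abs_of_neg hxneg, hxst]; ring
      have h2 : |x| = e*(-2*u-2) + (e - t) := by rw [abs_of_neg hxneg, hxst]; ring
      have h3 : |x - e| = 2*e*(-u-1) + (2*e - t) := by
        rw [abs_of_neg (by omega : x - e < 0), hxst]; ring
      conv_rhs => rw [h2, hdiv _ _ _ he (by omega) (by omega)]
      rw [h1, hdiv _ _ _ h2e (by omega) (by omega)]
      rw [h3, hdiv _ _ _ h2e (by omega) (by omega)]
      rw [if_neg (by omega : ¬ e < x)]; ring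

lemma mem_iff (D m M k : ℤ) (hD : 0 < D) :
    (m/D < k ∧ k ≤ (M-1)/D) ↔ (m < k*D ∧ k*D < M) := by
  constructor
  · rintro ⟨h1, h2⟩
    constructor
    · calc m < (m/D + 1) * D := Int.lt_ediv_add_one_mul_self m hD
        _ ≤ k * D := by apply mul_le_mul_of_nonneg_right; omega; omega
    · have : k * D ≤ ((M-1)/D) * D := by apply mul_le_mul_of_nonneg_right; omega; omega
      have h3 : ((M-1)/D) * D ≤ M - 1 := Int.ediv_mul_le (M-1) (ne_of_gt hD)
      omega
  · rintro ⟨h1, h2⟩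
    constructor
    · by_contra h
      push_neg at h
      have : k * D ≤ (m/D) * D := by apply mul_le_mul_of_nonneg_right; omega; omega
      have h3 : (m/D) * D ≤ m := Int.ediv_mul_le m (ne_of_gt hD)
      omega
    · have : k * D ≤ M - 1 := by omega
      calc k ≤ (k*D)/D := by rw [Int.mul_ediv_cancel _ (ne_of_gt hD)]
        _ ≤ (M-1)/D := Int.ediv_le_ediv hD this

lemma card_eq (d : ℤ) (hd : 1 ≤ d) (g : ℤ → ℤ)
    (gper : ∀ k x : ℤ, g (x + k*(2*d+2)) = g x + k*(2*d+2)) :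
    (Nat.card {p : ℤ × ℤ | 1 ≤ p.1 ∧ p.1 ≤ d ∧
        ((p.1 < p.2 ∧ g p.2 < g p.1) ∨ (p.2 < p.1 ∧ g p.1 < g p.2))} : ℤ)
      = ∑ p ∈ (Finset.Icc 1 d ×ˢ Finset.Icc (-d) (d+1)),
          (((max (p.1-p.2) (g p.1 - g p.2) - 1)/(2*d+2)
            - (min (p.1-p.2) (g p.1 - g p.2))/(2*d+2)).toNat : ℤ) := by
  have hD0 : (0:ℤ) < 2*d+2 := by omega
  set t : ℤ × ℤ → Finset ℤ := fun p => Finset.Ioc ((min (p.1-p.2) (g p.1 - g p.2))/(2*d+2))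
      ((max (p.1-p.2) (g p.1 - g p.2) - 1)/(2*d+2)) with ht
  have memt : ∀ i j k : ℤ, k ∈ t (i,j) ↔
      ((i < j + k*(2*d+2) ∧ g (j + k*(2*d+2)) < g i) ∨
       (j + k*(2*d+2) < i ∧ g i < g (j + k*(2*d+2)))) := by
    intro i j k
    rw [ht]
    simp only [Finset.mem_Ioc]
    rw [mem_iff _ _ _ _ hD0, gper k j]
    omega
  have idm : ∀ m : ℤ, ((m+d) % (2*d+2) - d) + ((m+d)/(2*d+2))*(2*d+2) = m := by
    intro m
    have h1 := Int.emod_add_mul_ediv (m+d) (2*d+2)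
    have h2 : ((m+d)/(2*d+2))*(2*d+2) = (2*d+2)*((m+d)/(2*d+2)) := mul_comm _ _
    linarith
  have hmod : ∀ m : ℤ, 0 ≤ (m+d) % (2*d+2) ∧ (m+d) % (2*d+2) < 2*d+2 := fun m =>
    ⟨Int.emod_nonneg _ (ne_of_gt hD0), Int.emod_lt_of_pos _ hD0⟩
  classical
  have e : {p : ℤ × ℤ // p ∈ {p : ℤ × ℤ | 1 ≤ p.1 ∧ p.1 ≤ d ∧
        ((p.1 < p.2 ∧ g p.2 < g p.1) ∨ (p.2 < p.1 ∧ g p.1 < g p.2))}} ≃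
      {y : (_ : ℤ × ℤ) × ℤ // y ∈ (Finset.Icc 1 d ×ˢ Finset.Icc (-d) (d+1)).sigma
          (fun p => t p)} := by
    refine ⟨fun x => ⟨⟨(x.1.1, (x.1.2+d) % (2*d+2) - d), (x.1.2+d)/(2*d+2)⟩, ?_⟩,
      fun y => ⟨(y.1.1.1, y.1.1.2 + y.1.2*(2*d+2)), ?_⟩, ?_, ?_⟩
    · obtain ⟨⟨i, m⟩, hx⟩ := x
      obtain ⟨h1, h2, h3⟩ := hx
      rw [Finset.mem_sigma]
      constructor
      · simp only [Finset.mem_product, Finset.mem_Icc]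
        have := hmod m
        constructor
        · exact ⟨h1, h2⟩
        · omega
      · rw [memt]
        simp only
        rw [idm m]
        exact h3
    · obtain ⟨⟨⟨i, j⟩, k⟩, hy⟩ := y
      rw [Finset.mem_sigma] at hy
      obtain ⟨hp, hk⟩ := hy
      simp only [Finset.mem_product, Finset.mem_Icc] at hp
      rw [memt] at hk
      exact ⟨hp.1.1, hp.1.2, hk⟩
    · rintro ⟨⟨i, m⟩, hx⟩
      apply Subtype.ext
      simp only
      rw [idm m]
    · rintro ⟨⟨⟨i, j⟩, k⟩, hy⟩
      rw [Finset.mem_sigma] at hy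
      obtain ⟨hp, hk⟩ := hy
      simp only [Finset.mem_product, Finset.mem_Icc] at hp
      have hb1 : (0:ℤ) ≤ j + d := by omega
      have hb2 : j + d < 2*d+2 := by omega
      apply Subtype.ext
      have hmodj : ((j + k*(2*d+2)) + d) % (2*d+2) = j + d := by
        rw [show (j + k*(2*d+2)) + d = (j+d) + k*(2*d+2) by ring, Int.add_mul_emod_self_right,
          Int.emod_eq_of_lt hb1 hb2]
      have hdivj : ((j + k*(2*d+2)) + d) / (2*d+2) = k := by
        rw [show (j + k*(2*d+2)) + d = (j+d) + k*(2*d+2) by ring,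
          Int.add_mul_ediv_right _ _ (ne_of_gt hD0),
          Int.ediv_eq_zero_of_lt hb1 hb2, zero_add]
      simp only [Sigma.mk.inj_iff]
      rw [hmodj, hdivj]
      simp
  rw [Nat.card_congr e, Nat.card_eq_finsetCard, Finset.card_sigma]
  push_cast [ht, Int.card_Ioc]
  rfl

lemma split1 (d : ℤ) (hd : 1 ≤ d) (f : ℤ → ℤ) :
    ∑ j ∈ Finset.Icc (-d) (d+1), f j = (∑ j ∈ Finset.Icc (-d) d, f j) + f (d+1) := by
  rw [show Finset.Icc (-d) (d+1) = insert (d+1) (Finset.Icc (-d) d) from by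
      ext x; simp only [Finset.mem_Icc, Finset.mem_insert]; omega,
    Finset.sum_insert (by simp only [Finset.mem_Icc]; omega)]
  ring

lemma split2 (d : ℤ) (hd : 1 ≤ d) (f : ℤ → ℤ) :
    ∑ j ∈ Finset.Icc (-d) d, f j
      = (∑ j ∈ Finset.Icc 1 d, f (-j)) + f 0 + ∑ j ∈ Finset.Icc 1 d, f j := by
  have hu : Finset.Icc (-d) d = Finset.Icc (-d) (-1) ∪ Finset.Icc 0 d := by
    ext x; simp only [Finset.mem_Icc, Finset.mem_union]; omega
  have hdis : Disjoint (Finset.Icc (-d) (-1)) (Finset.Icc (0:ℤ) d) := by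
    rw [Finset.disjoint_left]; intro a ha hb
    simp only [Finset.mem_Icc] at ha hb; omega
  rw [hu, Finset.sum_union hdis,
    show Finset.Icc (0:ℤ) d = insert 0 (Finset.Icc 1 d) from by
      ext x; simp only [Finset.mem_Icc, Finset.mem_insert]; omega,
    Finset.sum_insert (by simp only [Finset.mem_Icc]; omega)]
  have hneg : ∑ j ∈ Finset.Icc (-d) (-1), f j = ∑ j ∈ Finset.Icc 1 d, f (-j) := by
    apply Finset.sum_nbij' (fun j => -j) (fun j => -j)
    · intro a ha; simp only [Finset.mem_Icc] at *; omega
    · intro a ha; simp only [Finset.mem_Icc] at *; omega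
    · intro a _; ring
    · intro a _; ring
    · intro a _; rw [neg_neg]
  rw [hneg]; ring

lemma symsum (d : ℤ) (F : ℤ × ℤ → ℤ) (hF : ∀ i j : ℤ, F (i,j) = F (j,i)) :
    2 * ∑ p ∈ (Finset.Icc 1 d ×ˢ Finset.Icc 1 d).filter (fun p => p.1 ≤ p.2), F p
      = (∑ p ∈ Finset.Icc 1 d ×ˢ Finset.Icc 1 d, F p) + ∑ i ∈ Finset.Icc 1 d, F (i,i) := by
  classical
  set sq := Finset.Icc 1 d ×ˢ Finset.Icc 1 d with hsq
  have h1 := Finset.sum_filter_add_sum_filter_not sq (fun p => p.1 ≤ p.2) F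
  have h2 : ∑ p ∈ sq.filter (fun p => ¬ p.1 ≤ p.2), F p
      = ∑ p ∈ sq.filter (fun p => p.1 < p.2), F p := by
    apply Finset.sum_nbij' (fun p => Prod.swap p) (fun p => Prod.swap p)
    · intro a ha; simp only [Finset.mem_filter, hsq, Finset.mem_product] at *
      exact ⟨⟨ha.1.2, ha.1.1⟩, by simp [Prod.swap]; omega⟩
    · intro a ha; simp only [Finset.mem_filter, hsq, Finset.mem_product] at *
      exact ⟨⟨ha.1.2, ha.1.1⟩, by simp [Prod.swap]; omega⟩
    · intro a _; simp
    · intro a _; simp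
    · intro a _; rw [← hF]; rfl
  have h3 : ∑ p ∈ sq.filter (fun p => p.1 ≤ p.2), F p
      = (∑ p ∈ sq.filter (fun p => p.1 < p.2), F p) + ∑ i ∈ Finset.Icc 1 d, F (i,i) := by
    have h4 := Finset.sum_filter_add_sum_filter_not (sq.filter (fun p => p.1 ≤ p.2))
      (fun p => p.1 < p.2) F
    rw [Finset.filter_filter, Finset.filter_filter] at h4
    have h5 : sq.filter (fun a => a.1 ≤ a.2 ∧ a.1 < a.2) = sq.filter (fun p => p.1 < p.2) := by
      apply Finset.filter_congr; intro x _; constructor <;> intro h <;> [exact h.2; exact ⟨h.le, h⟩]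
    have h6 : ∑ p ∈ sq.filter (fun a => a.1 ≤ a.2 ∧ ¬ a.1 < a.2), F p
        = ∑ i ∈ Finset.Icc 1 d, F (i,i) := by
      apply Finset.sum_nbij' (fun p => p.1) (fun i => (i,i))
      · intro a ha; simp only [Finset.mem_filter, hsq, Finset.mem_product] at ha
        exact ha.1.1
      · intro a ha; simp only [Finset.mem_filter, hsq, Finset.mem_product]
        exact ⟨⟨ha, ha⟩, by omega⟩
      · rintro ⟨x, y⟩ ha; simp only [Finset.mem_filter, hsq, Finset.mem_product] at ha
        have : x = y := by omega
        simp [this]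
      · intro a _; rfl
      · rintro ⟨x, y⟩ ha; simp only [Finset.mem_filter, hsq, Finset.mem_product] at ha
        have h7 : x = y := by omega
        simp [h7]
    rw [← h5, ← h6] at *
    linarith [h4]
  linarith [h1, h2, h3]
/-- Decomposition of the symmetrized affine type C length formula:
the inversion count over `[1..d] × ℤ` equals the one over `[1..d] × [-d..d]`
plus twice the affine floored-quotient corrections. (Both sides of the
identity from the paper are multiplied through by 2.) -/
theorem stmt_16 (d : ℤ) (hd : 1 ≤ d) (g : ℤ → ℤ) (hg : Function.Bijective g)
    (hper : ∀ i : ℤ, g (i + (2 * d + 2)) = g i + (2 * d + 2))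
    (hneg : ∀ i : ℤ, g (-i) = - g i) :
    (Nat.card {p : ℤ × ℤ | 1 ≤ p.1 ∧ p.1 ≤ d ∧
        ((p.1 < p.2 ∧ g p.2 < g p.1) ∨ (p.2 < p.1 ∧ g p.1 < g p.2))} : ℤ)
      = ((Finset.Icc 1 d ×ˢ Finset.Icc (-d) d).filter (fun p =>
            (p.1 < p.2 ∧ g p.2 < g p.1) ∨ (p.2 < p.1 ∧ g p.1 < g p.2))).card
        + 2 * ∑ p ∈ (Finset.Icc 1 d ×ˢ Finset.Icc 1 d).filter (fun p => p.1 ≤ p.2),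
            (|g p.1 - g p.2| / (2 * d + 2) + |g p.1 + g p.2| / (2 * d + 2)) := by
  have hD0 : (0:ℤ) < 2*d+2 := by omega
  have g0 : g 0 = 0 := by have h := hneg 0; rw [neg_zero] at h; omega
  have gper : ∀ k x : ℤ, g (x + k*(2*d+2)) = g x + k*(2*d+2) := by
    intro k x
    induction k using Int.induction_on with
    | zero => simp
    | succ n ih =>
        rw [show x + ((n:ℤ)+1)*(2*d+2) = (x + (n:ℤ)*(2*d+2)) + (2*d+2) by ring, hper, ih]; ring
    | pred n ih =>
        have h := hper (x + (-(n:ℤ)-1)*(2*d+2))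
        rw [show x + (-(n:ℤ)-1)*(2*d+2) + (2*d+2) = x + (-(n:ℤ))*(2*d+2) by ring, ih] at h
        linarith
  have gfix : g (d+1) = d+1 := by
    have h1 := hneg (d+1)
    have h2 := hper (-(d+1))
    rw [show -(d+1) + (2*d+2) = d+1 by ring, h1] at h2
    linarith
  have hdvd : ∀ x y : ℤ, -(2*d+2) < x - y → x - y < 2*d+2 → (2*d+2) ∣ (g x - g y) → x = y := by
    rintro x y h1 h2 ⟨k, hk⟩
    have h3 : g x = g (y + k*(2*d+2)) := by rw [gper]; linarith
    have h4 : x = y + k*(2*d+2) := hg.injective h3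
    have h5 : k = 0 := by
      rcases lt_trichotomy k 0 with h|h|h
      · have h6 : (2*d+2)*k ≤ (2*d+2)*(-1) := mul_le_mul_of_nonneg_left (by omega) (by omega)
        have hc : k*(2*d+2) = (2*d+2)*k := mul_comm _ _
        omega
      · exact h
      · have h6 : (2*d+2)*1 ≤ (2*d+2)*k := mul_le_mul_of_nonneg_left (by omega) (by omega)
        have hc : k*(2*d+2) = (2*d+2)*k := mul_comm _ _
        omega
    rw [h5, zero_mul, add_zero] at h4; exact h4
  have nd1 : ∀ i j : ℤ, 1 ≤ i → i ≤ d → 1 ≤ j → j ≤ d → i ≠ j → ¬ (2*d+2) ∣ (g i - g j) :=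
    fun i j h1 h2 h3 h4 h5 h => h5 (hdvd i j (by omega) (by omega) h)
  have nd2 : ∀ i j : ℤ, 1 ≤ i → i ≤ d → 1 ≤ j → j ≤ d → ¬ (2*d+2) ∣ (g i + g j) := by
    intro i j h1 h2 h3 h4 h
    have h6 : g i - g (-j) = g i + g j := by rw [hneg]; ring
    have := hdvd i (-j) (by omega) (by omega) (by rw [h6]; exact h)
    omega
  have nd3 : ∀ i : ℤ, 1 ≤ i → i ≤ d → ¬ (2*d+2) ∣ g i := by
    intro i h1 h2 h
    have h6 : g i - g 0 = g i := by rw [g0]; ring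
    have := hdvd i 0 (by omega) (by omega) (by rw [h6]; exact h)
    omega
  have nd4 : ∀ i : ℤ, 1 ≤ i → i ≤ d → ¬ (2*d+2) ∣ (g i - (d+1)) := by
    intro i h1 h2 h
    have h6 : g i - g (d+1) = g i - (d+1) := by rw [gfix]
    have := hdvd i (d+1) (by omega) (by omega) (by rw [h6]; exact h)
    omega
  have nd5 : ∀ i : ℤ, 1 ≤ i → i ≤ d → ¬ (d+1) ∣ g i := by
    rintro i h1 h2 ⟨m, hm⟩
    rcases Int.even_or_odd m with ⟨n, hn⟩ | ⟨n, hn⟩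
    · exact nd3 i h1 h2 ⟨n, by rw [hm, hn]; ring⟩
    · exact nd4 i h1 h2 ⟨n, by rw [hm, hn]; ring⟩
  rw [card_eq d hd g gper]
  rw [Finset.card_filter]
  push_cast
  rw [symsum d (fun p => |g p.1 - g p.2| / (2*d+2) + |g p.1 + g p.2| / (2*d+2))
    (fun i j => by simp only [abs_sub_comm (g i) (g j), add_comm (g i) (g j)])]
  simp only [Finset.sum_product]
  have main : ∀ i ∈ Finset.Icc 1 d,
      (∑ j ∈ Finset.Icc (-d) (d+1),
        (((max (i-j) (g i - g j) - 1)/(2*d+2) - (min (i-j) (g i - g j))/(2*d+2)).toNat : ℤ))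
      = (∑ j ∈ Finset.Icc (-d) d,
          (if (i < j ∧ g j < g i) ∨ (j < i ∧ g i < g j) then (1:ℤ) else 0))
        + ((∑ j ∈ Finset.Icc 1 d, (|g i - g j| / (2*d+2) + |g i + g j| / (2*d+2)))
            + (|g i - g i| / (2*d+2) + |g i + g i| / (2*d+2))) := by
    intro i hi
    rw [Finset.mem_Icc] at hi
    obtain ⟨hi1, hi2⟩ := hi
    have E1 : ∀ j ∈ Finset.Icc (1:ℤ) d,
        (((max (i-j) (g i - g j) - 1)/(2*d+2) - (min (i-j) (g i - g j))/(2*d+2)).toNat : ℤ)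
        = |g i - g j| / (2*d+2) + (if (i < j ∧ g j < g i) ∨ (j < i ∧ g i < g j) then (1:ℤ) else 0) := by
      intro j hj
      rw [Finset.mem_Icc] at hj
      by_cases hij : i = j
      · subst hij
        have hm1 : (-1 : ℤ)/(2*d+2) = -1 := by
          have h9 := hdiv (2*d+2) (-1) (2*d+1) hD0 (by omega) (by omega)
          rw [show (2*d+2)*(-1) + (2*d+1) = (-1:ℤ) by ring] at h9
          exact h9
        simp only [sub_self, max_self, min_self, abs_zero, Int.zero_ediv, zero_sub, hm1]
        rw [if_neg (by omega)]
        simp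
      · rw [val (2*d+2) (i-j) (g i - g j) hD0 (by omega) (by rw [abs_lt]; omega)
            (nd1 i j hi1 hi2 hj.1 hj.2 hij)]
        congr 1
        apply if_congr _ rfl rfl
        omega
    have E2 : ∀ j ∈ Finset.Icc (1:ℤ) d,
        (((max (i-(-j)) (g i - g (-j)) - 1)/(2*d+2) - (min (i-(-j)) (g i - g (-j)))/(2*d+2)).toNat : ℤ)
        = |g i + g j| / (2*d+2) + (if (i < -j ∧ g (-j) < g i) ∨ (-j < i ∧ g i < g (-j)) then (1:ℤ) else 0) := by
      intro j hj
      rw [Finset.mem_Icc] at hj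
      simp only [hneg j, sub_neg_eq_add]
      rw [val (2*d+2) (i+j) (g i + g j) hD0 (by omega) (by rw [abs_lt]; omega)
          (nd2 i j hi1 hi2 hj.1 hj.2)]
      congr 1
      apply if_congr _ rfl rfl
      omega
    have E3 : (((max (i-(0:ℤ)) (g i - g 0) - 1)/(2*d+2) - (min (i-(0:ℤ)) (g i - g 0))/(2*d+2)).toNat : ℤ)
        = |g i| / (2*d+2) + (if (i < 0 ∧ g 0 < g i) ∨ (0 < i ∧ g i < g 0) then (1:ℤ) else 0) := by
      simp only [g0, sub_zero]
      rw [val (2*d+2) i (g i) hD0 (by omega) (by rw [abs_lt]; omega) (nd3 i hi1 hi2)]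
      congr 1
      apply if_congr _ rfl rfl
      omega
    have E4 : (((max (i-(d+1)) (g i - g (d+1)) - 1)/(2*d+2) - (min (i-(d+1)) (g i - g (d+1)))/(2*d+2)).toNat : ℤ)
        = |g i - (d+1)| / (2*d+2) + (if d+1 < g i then (1:ℤ) else 0) := by
      rw [gfix]
      rw [val (2*d+2) (i-(d+1)) (g i - (d+1)) hD0 (by omega) (by rw [abs_lt]; omega)
          (nd4 i hi1 hi2)]
      congr 1
      apply if_congr _ rfl rfl
      omega
    have keyi : |g i|/(2*d+2) + |g i - (d+1)|/(2*d+2) + (if d+1 < g i then (1:ℤ) else 0)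
        = |g i + g i|/(2*d+2) := by
      have hD' : |g i + g i|/(2*d+2) = |g i|/(d+1) := by
        rw [show g i + g i = 2 * g i by ring, abs_mul,
          show |(2:ℤ)| = 2 by norm_num,
          show (2*d+2 : ℤ) = 2*(d+1) by ring,
          Int.mul_ediv_mul_of_pos _ _ (by norm_num : (0:ℤ) < 2)]
      rw [hD']
      have := diag (d+1) (g i) (by omega) (nd5 i hi1 hi2)
      rw [show (2*(d+1) : ℤ) = 2*d+2 by ring] at this
      exact this
    rw [split1 d hd, split2 d hd, split2 d hd
        (fun j => if (i < j ∧ g j < g i) ∨ (j < i ∧ g i < g j) then (1:ℤ) else 0)]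
    rw [Finset.sum_congr rfl E1, Finset.sum_congr rfl E2, E3, E4]
    rw [Finset.sum_add_distrib, Finset.sum_add_distrib, Finset.sum_add_distrib]
    have hz : |g i - g i| / (2*d+2) = 0 := by
      rw [sub_self, abs_zero, Int.zero_ediv]
    rw [hz]
    linarith [keyi]
  rw [Finset.sum_congr rfl main, Finset.sum_add_distrib, Finset.sum_add_distrib]
end
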